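/- arXiv:0906.1391 — 4 statements merged into one kernel-verified Lean document; each statement's English description precedes it below -/
import Mathlib

section
/- Let Z = m_1P_1 + ⋯ + m_sP_s be a fat point scheme in ℙⁿ×ℙᵐ. If Z is arithmetically Cohen–Macaulay, then there exist a bihomogeneous form L of degree (1,0) and a bihomogeneous form L' of degree (0,1) whose images in R/I_Z form a regular sequence of length two on R/I_Z. -/
/-!
Formalization of statements from "Separators of fat points in ℙⁿ×ℙᵐ"
(Guardo–Van Tuyl).  The bigraded coordinate ring `R = k[x₀,…,xₙ,y₀,…,y_m]` of
`ℙⁿ×ℙᵐ` is modelled as `MvPolynomial (Fin (n+1) ⊕ Fin (m+1)) k`, where the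
variable `X (Sum.inl i)` is `xᵢ` (degree `(1,0)`) and `X (Sum.inr j)` is `yⱼ`
(degree `(0,1)`); bihomogeneity is weighted homogeneity for the weight `biWeight`.
-/

open MvPolynomial

noncomputable section

/-- The ℕ²-graded coordinate ring `R` of `ℙⁿ×ℙᵐ`. -/
abbrev BiRing (k : Type) [Field k] (n m : ℕ) : Type :=
  MvPolynomial (Fin (n + 1) ⊕ Fin (m + 1)) k

/-- The weight function on the variables giving the ℕ²-grading:
`deg xᵢ = (1,0)` and `deg yⱼ = (0,1)`. -/
def biWeight (n m : ℕ) : Fin (n + 1) ⊕ Fin (m + 1) → ℕ × ℕ :=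
  Sum.elim (fun _ => (1, 0)) (fun _ => (0, 1))

variable {k : Type} [Field k] {n m : ℕ}

/-- `F` is bihomogeneous of degree `d ∈ ℕ²`. -/
def BihomOfDeg (F : BiRing k n m) (d : ℕ × ℕ) : Prop :=
  IsWeightedHomogeneous (biWeight n m) F d

/-- `I` is the defining (prime) ideal of a point of `ℙⁿ×ℙᵐ`: it is generated by
`n` linear forms of degree `(1,0)` and `m` linear forms of degree `(0,1)` which
are linearly independent (so that they cut out a single point of `ℙⁿ×ℙᵐ`). -/
def IsPointIdeal (I : Ideal (BiRing k n m)) : Prop :=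
  ∃ (L : Fin n → BiRing k n m) (L' : Fin m → BiRing k n m),
    (∀ a, BihomOfDeg (L a) (1, 0)) ∧ (∀ b, BihomOfDeg (L' b) (0, 1)) ∧
    LinearIndependent k (Sum.elim L L') ∧
    I = Ideal.span (Set.range L ∪ Set.range L')

/-- The defining ideal `I_Z = I_{P₁}^{m₁} ∩ ⋯ ∩ I_{P_s}^{m_s}` of the fat point
scheme `Z = m₁P₁ + ⋯ + m_sP_s`. -/
def fatIdeal {s : ℕ} (P : Fin s → Ideal (BiRing k n m)) (mult : Fin s → ℕ) :
    Ideal (BiRing k n m) :=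
  ⨅ j, P j ^ mult j

/-- `f, g` is a regular sequence of length two on `R/I`: the class of `f` is a
nonzero-divisor on `R/I`, the class of `g` is a nonzero-divisor on `R/(I,f)`,
and `R/(I,f,g) ≠ 0`. -/
def IsRegularPair (I : Ideal (BiRing k n m)) (f g : BiRing k n m) : Prop :=
  (∀ h, f * h ∈ I → h ∈ I) ∧
  (∀ h, g * h ∈ I ⊔ Ideal.span {f} → h ∈ I ⊔ Ideal.span {f}) ∧
  I ⊔ Ideal.span {f, g} ≠ ⊤

/-- The fat point scheme with ideal `I` is arithmetically Cohen–Macaulay (ACM),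
i.e. `depth R/I_Z = dim R/I_Z = 2`.  Since `dim R/I_Z = 2` always holds for a
(nonempty) fat point scheme and `depth ≤ dim`, this is equivalent to the
existence of a regular sequence of length two on `R/I_Z` contained in the
irrelevant maximal ideal `(x₀,…,xₙ,y₀,…,y_m)` (= polynomials with zero constant
term). -/
def IsACM (I : Ideal (BiRing k n m)) : Prop :=
  ∃ f g : BiRing k n m,
    constantCoeff f = 0 ∧ constantCoeff g = 0 ∧ IsRegularPair I f g

namespace StmtAux
open Finsupp


variable (k n m)

/-- The space of linear forms in the `x` variables. -/
def Wx : Submodule k (BiRing k n m) :=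
  Submodule.span k (Set.range fun i : Fin (n + 1) => (X (Sum.inl i) : BiRing k n m))

/-- The space of linear forms in the `y` variables. -/
def Wy : Submodule k (BiRing k n m) :=
  Submodule.span k (Set.range fun j : Fin (m + 1) => (X (Sum.inr j) : BiRing k n m))

/-- The space of all linear forms. -/
def Lin : Submodule k (BiRing k n m) :=
  Submodule.span k (Set.range (X : _ → BiRing k n m))

variable {k n m}

lemma biWeight_nonTorsion : Finsupp.NonTorsionWeight ℕ (biWeight n m) :=
  Finsupp.nonTorsionWeight_of (R := ℕ) (w := biWeight n m) (fun i => by cases i <;> simp [biWeight])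

lemma weight_biWeight_eq_zero {d : Fin (n + 1) ⊕ Fin (m + 1) →₀ ℕ}
    (h : weight (biWeight n m) d = 0) : d = 0 := by
  have := biWeight_nonTorsion (n := n) (m := m)
  exact (Finsupp.weight_eq_zero_iff_eq_zero _).mp h

lemma weight_eq_10 {d : Fin (n + 1) ⊕ Fin (m + 1) →₀ ℕ}
    (h : weight (biWeight n m) d = (1, 0)) : ∃ i, d = Finsupp.single (Sum.inl i) 1 := by
  have hd0 : d ≠ 0 := by
    rintro rfl; rw [map_zero] at h; exact (Prod.mk.injEq _ _ _ _ ▸ h.symm).elim (by simp)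
  obtain ⟨i₀, hi₀⟩ := Finsupp.support_nonempty_iff.mpr hd0
  have hdi₀ : d i₀ ≠ 0 := Finsupp.mem_support_iff.mp hi₀
  have hle : biWeight n m i₀ ≤ weight (biWeight n m) d :=
    Finsupp.le_weight_of_ne_zero' (w := biWeight n m) hdi₀
  rw [h] at hle
  obtain (a | b) := i₀
  · refine ⟨a, ?_⟩
    have hsle : Finsupp.single (Sum.inl a) 1 ≤ d := by
      rw [Finsupp.single_le_iff]; omega
    have hdd : Finsupp.single (Sum.inl a) 1 + (d - Finsupp.single (Sum.inl a) 1) = d :=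
      add_tsub_cancel_of_le hsle
    have hw : weight (biWeight n m) (d - Finsupp.single (Sum.inl a) 1) = 0 := by
      have := congrArg (weight (biWeight n m)) hdd
      rw [map_add, h] at this
      have hws : weight (biWeight n m) (Finsupp.single (Sum.inl a) 1) = (1, 0) := by
        rw [Finsupp.weight_apply, Finsupp.sum_single_index] <;> simp [biWeight]
      rw [hws] at this
      exact add_left_cancel (this.trans (add_zero ((1:ℕ),(0:ℕ))).symm)
    have := weight_biWeight_eq_zero hw
    rw [← hdd, this, add_zero]
  · exfalso
    simp only [biWeight, Sum.elim_inr, Prod.mk_le_mk] at hle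
    omega

lemma weight_eq_01 {d : Fin (n + 1) ⊕ Fin (m + 1) →₀ ℕ}
    (h : weight (biWeight n m) d = (0, 1)) : ∃ j, d = Finsupp.single (Sum.inr j) 1 := by
  have hd0 : d ≠ 0 := by
    rintro rfl; rw [map_zero] at h; exact (Prod.mk.injEq _ _ _ _ ▸ h.symm).elim (by simp)
  obtain ⟨i₀, hi₀⟩ := Finsupp.support_nonempty_iff.mpr hd0
  have hdi₀ : d i₀ ≠ 0 := Finsupp.mem_support_iff.mp hi₀
  have hle : biWeight n m i₀ ≤ weight (biWeight n m) d :=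
    Finsupp.le_weight_of_ne_zero' (w := biWeight n m) hdi₀
  rw [h] at hle
  obtain (a | b) := i₀
  · exfalso
    simp only [biWeight, Sum.elim_inl, Prod.mk_le_mk] at hle
    omega
  · refine ⟨b, ?_⟩
    have hsle : Finsupp.single (Sum.inr b) 1 ≤ d := by
      rw [Finsupp.single_le_iff]; omega
    have hdd : Finsupp.single (Sum.inr b) 1 + (d - Finsupp.single (Sum.inr b) 1) = d :=
      add_tsub_cancel_of_le hsle
    have hw : weight (biWeight n m) (d - Finsupp.single (Sum.inr b) 1) = 0 := by
      have := congrArg (weight (biWeight n m)) hdd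
      rw [map_add, h] at this
      have hws : weight (biWeight n m) (Finsupp.single (Sum.inr b) 1) = (0, 1) := by
        rw [Finsupp.weight_apply, Finsupp.sum_single_index] <;> simp [biWeight]
      rw [hws] at this
      exact add_left_cancel (this.trans (add_zero ((0:ℕ),(1:ℕ))).symm)
    have := weight_biWeight_eq_zero hw
    rw [← hdd, this, add_zero]

lemma bihom10_mem_Wx {p : BiRing k n m} (hp : BihomOfDeg p (1, 0)) : p ∈ Wx k n m := by
  rw [p.as_sum]
  refine Submodule.sum_mem _ fun d hd => ?_
  obtain ⟨i, rfl⟩ := weight_eq_10 (hp (MvPolynomial.mem_support_iff.mp hd))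
  have : (monomial (Finsupp.single (Sum.inl i) 1) (coeff (Finsupp.single (Sum.inl i) 1) p)
      : BiRing k n m) = coeff (Finsupp.single (Sum.inl i) 1) p • X (Sum.inl i) := by
    rw [MvPolynomial.X, MvPolynomial.smul_monomial, smul_eq_mul, mul_one]
  rw [this]
  exact Submodule.smul_mem _ _ (Submodule.subset_span ⟨i, rfl⟩)

lemma bihom01_mem_Wy {p : BiRing k n m} (hp : BihomOfDeg p (0, 1)) : p ∈ Wy k n m := by
  rw [p.as_sum]
  refine Submodule.sum_mem _ fun d hd => ?_
  obtain ⟨j, rfl⟩ := weight_eq_01 (hp (MvPolynomial.mem_support_iff.mp hd))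
  have : (monomial (Finsupp.single (Sum.inr j) 1) (coeff (Finsupp.single (Sum.inr j) 1) p)
      : BiRing k n m) = coeff (Finsupp.single (Sum.inr j) 1) p • X (Sum.inr j) := by
    rw [MvPolynomial.X, MvPolynomial.smul_monomial, smul_eq_mul, mul_one]
  rw [this]
  exact Submodule.smul_mem _ _ (Submodule.subset_span ⟨j, rfl⟩)

lemma Wx_le_whs : Wx k n m ≤ weightedHomogeneousSubmodule k (biWeight n m) (1, 0) := by
  rw [Wx, Submodule.span_le]
  rintro _ ⟨i, rfl⟩
  exact (MvPolynomial.mem_weightedHomogeneousSubmodule k (biWeight n m) (1,0) _).mpr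
    (isWeightedHomogeneous_X k (biWeight n m) (Sum.inl i))

lemma Wy_le_whs : Wy k n m ≤ weightedHomogeneousSubmodule k (biWeight n m) (0, 1) := by
  rw [Wy, Submodule.span_le]
  rintro _ ⟨j, rfl⟩
  exact (MvPolynomial.mem_weightedHomogeneousSubmodule k (biWeight n m) (0,1) _).mpr
    (isWeightedHomogeneous_X k (biWeight n m) (Sum.inr j))

lemma mem_Wx_bihom {p : BiRing k n m} (hp : p ∈ Wx k n m) : BihomOfDeg p (1, 0) :=
  (MvPolynomial.mem_weightedHomogeneousSubmodule k (biWeight n m) (1,0) p).mp (Wx_le_whs hp)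

lemma mem_Wy_bihom {p : BiRing k n m} (hp : p ∈ Wy k n m) : BihomOfDeg p (0, 1) :=
  (MvPolynomial.mem_weightedHomogeneousSubmodule k (biWeight n m) (0,1) p).mp (Wy_le_whs hp)

lemma disjoint_Wx_Wy : Disjoint (Wx k n m) (Wy k n m) := by
  rw [Submodule.disjoint_def]
  intro p hx hy
  have h1 : IsWeightedHomogeneous (biWeight n m) p (1, 0) := mem_Wx_bihom hx
  have h2 : IsWeightedHomogeneous (biWeight n m) p (0, 1) := mem_Wy_bihom hy
  ext d
  by_contra hc
  have := h1 hc
  have := h2 hc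
  simp_all

lemma li_X_inl : LinearIndependent k fun i : Fin (n + 1) => (X (Sum.inl i) : BiRing k n m) :=
  (MvPolynomial.linearIndependent_X _ _).comp Sum.inl Sum.inl_injective

lemma li_X_inr : LinearIndependent k fun j : Fin (m + 1) => (X (Sum.inr j) : BiRing k n m) :=
  (MvPolynomial.linearIndependent_X _ _).comp Sum.inr Sum.inr_injective

lemma finrank_Wx : Module.finrank k (Wx k n m) = n + 1 := by
  rw [Wx, finrank_span_eq_card li_X_inl]
  simp

lemma finrank_Wy : Module.finrank k (Wy k n m) = m + 1 := by
  rw [Wy, finrank_span_eq_card li_X_inr]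
  simp

lemma finrank_Lin : Module.finrank k (Lin k n m) = n + m + 2 := by
  rw [Lin, finrank_span_eq_card (MvPolynomial.linearIndependent_X _ _)]
  simp [Fintype.card_sum]
  ring

lemma Wx_le_Lin : Wx k n m ≤ Lin k n m :=
  Submodule.span_le.mpr (by rintro _ ⟨i, rfl⟩; exact Submodule.subset_span ⟨Sum.inl i, rfl⟩)

lemma Wy_le_Lin : Wy k n m ≤ Lin k n m :=
  Submodule.span_le.mpr (by rintro _ ⟨j, rfl⟩; exact Submodule.subset_span ⟨Sum.inr j, rfl⟩)

lemma bihom10_constantCoeff {p : BiRing k n m} (hp : BihomOfDeg p (1, 0)) :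
    constantCoeff p = 0 := by
  rw [MvPolynomial.constantCoeff_eq]
  exact hp.coeff_eq_zero 0 (by rw [map_zero]; decide)

lemma bihom01_constantCoeff {p : BiRing k n m} (hp : BihomOfDeg p (0, 1)) :
    constantCoeff p = 0 := by
  rw [MvPolynomial.constantCoeff_eq]
  exact hp.coeff_eq_zero 0 (by rw [map_zero]; decide)


section General
variable {k : Type} [Field k] {σ : Type}




/-- The ideal of polynomials all of whose monomials have `w`-weight at least `r`. -/
def degGE (w : σ → ℕ) (r : ℕ) : Ideal (MvPolynomial σ k) where
  carrier := {q | ∀ d ∈ q.support, r ≤ weight w d}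
  zero_mem' := by simp
  add_mem' := by
    classical
    intro a b ha hb d hd
    rcases Finset.mem_union.mp (MvPolynomial.support_add hd) with h | h
    · exact ha d h
    · exact hb d h
  smul_mem' := by
    classical
    intro c x hx d hd
    rw [smul_eq_mul] at hd
    rcases Finset.mem_add.mp (MvPolynomial.support_mul c x hd) with ⟨a, ha, b, hb, rfl⟩
    calc r ≤ weight w b := hx b hb
    _ ≤ weight w a + weight w b := Nat.le_add_left _ _
    _ = weight w (a + b) := (map_add _ _ _).symm

lemma mem_degGE {w : σ → ℕ} {r : ℕ} {q : MvPolynomial σ k} :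
    q ∈ degGE w r ↔ ∀ d ∈ q.support, r ≤ weight w d := Iff.rfl

lemma weight_single' (w : σ → ℕ) (i : σ) (c : ℕ) : weight w (Finsupp.single i c) = c * w i := by
  rw [weight_apply, Finsupp.sum_single_index] <;> simp [smul_eq_mul]

lemma mul_mem_degGE {w : σ → ℕ} {a b : ℕ} {p q : MvPolynomial σ k}
    (hp : p ∈ degGE w a) (hq : q ∈ degGE w b) : p * q ∈ degGE w (a + b) := by
  classical
  intro d hd
  rcases Finset.mem_add.mp (MvPolynomial.support_mul p q hd) with ⟨u, hu, v, hv, rfl⟩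
  rw [map_add]
  exact Nat.add_le_add (hp u hu) (hq v hv)

lemma pow_span_le_degGE (S : Set σ) (w : σ → ℕ) (hw : ∀ i ∈ S, 1 ≤ w i) (r : ℕ) :
    (Ideal.span (MvPolynomial.X '' S) : Ideal (MvPolynomial σ k)) ^ r ≤ degGE w r := by
  induction r with
  | zero => intro q _ d _; exact Nat.zero_le _
  | succ r ih =>
      rw [pow_succ]
      refine Ideal.mul_le.mpr fun p hp q hq => ?_
      have h1 : q ∈ degGE (k := k) w 1 := by
        refine Ideal.span_le.mpr ?_ hq
        rintro _ ⟨i, hi, rfl⟩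
        intro d hd
        rw [MvPolynomial.support_X (R := k)] at hd
        rcases Finset.mem_singleton.mp hd with rfl
        rw [weight_single', one_mul]
        exact hw i hi
      exact mul_mem_degGE (ih hp) h1

lemma monomial_mem_pow_span (S : Set σ) (r : ℕ) (d : σ →₀ ℕ) (c : k)
    (h : r ≤ weight (S.indicator 1) d) :
    monomial d c ∈ (Ideal.span (MvPolynomial.X '' S) : Ideal (MvPolynomial σ k)) ^ r := by
  induction r generalizing d with
  | zero => simp
  | succ r ih =>
      have hex : ∃ i ∈ S, d i ≠ 0 := by
        by_contra hc
        push_neg at hc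
        have : weight (S.indicator 1) d = 0 := by
          rw [weight_apply, Finsupp.sum]
          refine Finset.sum_eq_zero fun i hi => ?_
          by_cases hiS : i ∈ S
          · rw [hc i hiS]; simp
          · simp [Set.indicator_of_notMem hiS]
        omega
      obtain ⟨i, hiS, hdi⟩ := hex
      have hle : Finsupp.single i 1 ≤ d := by
        rw [Finsupp.single_le_iff]
        omega
      set d' := d - Finsupp.single i 1 with hd'
      have hdd : Finsupp.single i 1 + d' = d := by
        rw [hd']
        exact add_tsub_cancel_of_le hle
      have hwt : weight (S.indicator 1) d = 1 + weight (S.indicator 1) d' := by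
        rw [← hdd, map_add, weight_single']
        simp [Set.indicator_of_mem hiS]
      have hr : r ≤ weight (S.indicator 1) d' := by omega
      have : monomial d c = MvPolynomial.X i * monomial d' c := by
        rw [MvPolynomial.X, monomial_mul, one_mul, hdd]
      rw [this, pow_succ']
      exact Ideal.mul_mem_mul (Ideal.subset_span (Set.mem_image_of_mem _ hiS)) (ih d' hr)

lemma mem_pow_span_of_forall (S : Set σ) (r : ℕ) (q : MvPolynomial σ k)
    (h : ∀ d ∈ q.support, r ≤ weight (S.indicator 1) d) :
    q ∈ (Ideal.span (MvPolynomial.X '' S) : Ideal (MvPolynomial σ k)) ^ r := by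
  rw [q.as_sum]
  exact Ideal.sum_mem _ fun d hd => monomial_mem_pow_span S r d _ (h d hd)

/-- If `t ∉ S`, then `X t` is a nonzerodivisor modulo any power of the ideal of
variables in `S`. -/
lemma nzd_X_pow_span (S : Set σ) (t : σ) (ht : t ∉ S) (r : ℕ) (p : MvPolynomial σ k)
    (h : MvPolynomial.X t * p ∈ (Ideal.span (MvPolynomial.X '' S)) ^ r) :
    p ∈ (Ideal.span (MvPolynomial.X '' S)) ^ r := by
  have h' := pow_span_le_degGE S (S.indicator 1)
    (fun i hi => by simp [Set.indicator_of_mem hi]) r h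
  refine mem_pow_span_of_forall S r p fun d hd => ?_
  have hc : coeff (Finsupp.single t 1 + d) (MvPolynomial.X t * p) = coeff d p :=
    coeff_X_mul d t p
  have hmem : Finsupp.single t 1 + d ∈ (MvPolynomial.X t * p).support := by
    rw [MvPolynomial.mem_support_iff, hc]
    exact MvPolynomial.mem_support_iff.mp hd
  have := h' _ hmem
  rwa [map_add, weight_single', Set.indicator_of_notMem ht, mul_zero, zero_add] at this

/-- Polynomials with zero constant term lie in the ideal generated by all variables. -/
lemma mem_span_X_of_constantCoeff {p : MvPolynomial σ k} (h : constantCoeff p = 0) :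
    p ∈ Ideal.span (Set.range (MvPolynomial.X : σ → MvPolynomial σ k)) := by
  have : (Ideal.span (Set.range (MvPolynomial.X : σ → MvPolynomial σ k)))
      = (Ideal.span (MvPolynomial.X '' (Set.univ : Set σ))) ^ 1 := by
    rw [pow_one, Set.image_univ]
  rw [this]
  refine mem_pow_span_of_forall _ 1 p fun d hd => ?_
  have hd0 : d ≠ 0 := by
    rintro rfl
    exact MvPolynomial.mem_support_iff.mp hd h
  have : Finsupp.NonTorsionWeight ℕ ((Set.univ : Set σ).indicator (1 : σ → ℕ)) :=
    Finsupp.nonTorsionWeight_of (R := ℕ) (w := (Set.univ : Set σ).indicator (1 : σ → ℕ))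
      (fun i => by simp [Set.indicator_of_mem (Set.mem_univ i)])
  have hw : weight ((Set.univ : Set σ).indicator 1) d ≠ 0 :=
    fun hz => hd0 ((Finsupp.weight_eq_zero_iff_eq_zero _).mp hz)
  omega


end General

section AlgEquiv

/-- Any linearly independent family of `n+m+2` linear forms indexed by the variables is the
image of the variables under a `k`-algebra automorphism. -/
lemma exists_algEquiv (F : Fin (n + 1) ⊕ Fin (m + 1) → BiRing k n m)
    (hmem : ∀ i, F i ∈ Lin k n m) (hli : LinearIndependent k F) :
    ∃ Φ : BiRing k n m ≃ₐ[k] BiRing k n m, ∀ i, Φ (X i) = F i := by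
  classical
  haveI : FiniteDimensional k (Lin k n m) :=
    FiniteDimensional.span_of_finite k (Set.finite_range _)
  let b0 : Module.Basis (Fin (n + 1) ⊕ Fin (m + 1)) k (Lin k n m) :=
    Module.Basis.span (MvPolynomial.linearIndependent_X _ k)
  have hb0 : ∀ i, ((b0 i : BiRing k n m)) = X i := fun i => congrArg Subtype.val (Module.Basis.span_apply _ i)
  let F' : Fin (n + 1) ⊕ Fin (m + 1) → Lin k n m := fun i => ⟨F i, hmem i⟩
  have hli' : LinearIndependent k F' := by
    apply LinearIndependent.of_comp (Lin k n m).subtype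
    exact hli
  have hcard : Fintype.card (Fin (n + 1) ⊕ Fin (m + 1)) = Module.finrank k (Lin k n m) := by
    rw [finrank_Lin]; simp [Fintype.card_sum]; ring
  let bN : Module.Basis (Fin (n + 1) ⊕ Fin (m + 1)) k (Lin k n m) :=
    basisOfLinearIndependentOfCardEqFinrank hli' hcard
  have hbN : ∀ i, bN i = F' i := fun i =>
    congrFun (coe_basisOfLinearIndependentOfCardEqFinrank hli' hcard) i
  let e : Lin k n m ≃ₗ[k] Lin k n m := b0.equiv bN (Equiv.refl _)
  have he : ∀ i, e (b0 i) = bN i := fun i => b0.equiv_apply i bN (Equiv.refl _)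
  let G : Fin (n + 1) ⊕ Fin (m + 1) → BiRing k n m := fun i => ((e.symm (b0 i) : Lin k n m) : BiRing k n m)
  have keyF : ∀ v : Lin k n m, aeval F (v : BiRing k n m) = ((e v : Lin k n m) : BiRing k n m) := by
    intro v
    have : ((aeval F).toLinearMap.restrictScalars k).comp (Lin k n m).subtype
        = (Lin k n m).subtype.comp (e : Lin k n m →ₗ[k] Lin k n m) := by
      apply b0.ext
      intro i
      simp only [LinearMap.comp_apply, Submodule.subtype_apply, LinearMap.coe_restrictScalars,
        AlgHom.toLinearMap_apply, LinearEquiv.coe_coe]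
      rw [hb0, aeval_X, he, hbN]
    have := LinearMap.congr_fun this v
    simpa using this
  have keyG : ∀ v : Lin k n m, aeval G (v : BiRing k n m) = ((e.symm v : Lin k n m) : BiRing k n m) := by
    intro v
    have : ((aeval G).toLinearMap.restrictScalars k).comp (Lin k n m).subtype
        = (Lin k n m).subtype.comp (e.symm : Lin k n m →ₗ[k] Lin k n m) := by
      apply b0.ext
      intro i
      simp only [LinearMap.comp_apply, Submodule.subtype_apply, LinearMap.coe_restrictScalars,
        AlgHom.toLinearMap_apply, LinearEquiv.coe_coe]
      rw [hb0, aeval_X]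
    have := LinearMap.congr_fun this v
    simpa using this
  refine ⟨AlgEquiv.ofAlgHom (aeval F) (aeval G) ?_ ?_, fun i => by simp [aeval_X]⟩
  · apply MvPolynomial.algHom_ext
    intro i
    simp only [AlgHom.comp_apply, aeval_X, AlgHom.id_apply]
    show aeval F (G i) = X i
    rw [show G i = ((e.symm (b0 i) : Lin k n m) : BiRing k n m) from rfl, keyF]
    rw [e.apply_symm_apply, hb0]
  · apply MvPolynomial.algHom_ext
    intro i
    simp only [AlgHom.comp_apply, aeval_X, AlgHom.id_apply]
    have hFi : F i = ((bN i : Lin k n m) : BiRing k n m) := by rw [hbN]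
    rw [hFi, keyG, ← he, e.symm_apply_apply, hb0]

lemma map_equiv_mem_iff (Φ : BiRing k n m ≃ₐ[k] BiRing k n m) (Q : Ideal (BiRing k n m))
    (a : BiRing k n m) :
    a ∈ Ideal.map (Φ : BiRing k n m →+* BiRing k n m) Q ↔ Φ.symm a ∈ Q := by
  constructor
  · intro ha
    have hle : Ideal.map (Φ : BiRing k n m →+* BiRing k n m) Q
        ≤ Ideal.comap (Φ.symm : BiRing k n m →+* BiRing k n m) Q := by
      rw [Ideal.map_le_iff_le_comap]
      intro q hq
      simp only [Ideal.mem_comap, RingHom.coe_coe]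
      show Φ.symm (Φ q) ∈ Q
      rw [Φ.symm_apply_apply]; exact hq
    exact hle ha
  · intro ha
    have : a = Φ (Φ.symm a) := (Φ.apply_symm_apply a).symm
    rw [this]
    exact Ideal.mem_map_of_mem _ ha

end AlgEquiv

section NZD

variable {Lj : Fin n → BiRing k n m} {L'j : Fin m → BiRing k n m}

lemma snoc_mem_Wx (h10 : ∀ a, BihomOfDeg (Lj a) (1, 0)) {L : BiRing k n m} (hL : L ∈ Wx k n m) :
    ∀ i, (Fin.snoc Lj L : Fin (n+1) → BiRing k n m) i ∈ Wx k n m := by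
  intro i
  refine Fin.lastCases ?_ ?_ i
  · rw [Fin.snoc_last]; exact hL
  · intro a; rw [Fin.snoc_castSucc]; exact bihom10_mem_Wx (h10 a)

lemma snoc_mem_Wy (h01 : ∀ b, BihomOfDeg (L'j b) (0, 1)) {L' : BiRing k n m} (hL' : L' ∈ Wy k n m) :
    ∀ i, (Fin.snoc L'j L' : Fin (m+1) → BiRing k n m) i ∈ Wy k n m := by
  intro i
  refine Fin.lastCases ?_ ?_ i
  · rw [Fin.snoc_last]; exact hL'
  · intro b; rw [Fin.snoc_castSucc]; exact bihom01_mem_Wy (h01 b)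

/-- A linearly independent family of `n+1` vectors of `Wx` spans `Wx`. -/
lemma snoc_span_eq_Wx {v : Fin (n + 1) → BiRing k n m} (hv : ∀ i, v i ∈ Wx k n m)
    (hli : LinearIndependent k v) : Submodule.span k (Set.range v) = Wx k n m := by
  haveI : FiniteDimensional k (Wx k n m) :=
    FiniteDimensional.span_of_finite k (Set.finite_range _)
  have hle : Submodule.span k (Set.range v) ≤ Wx k n m := by
    rw [Submodule.span_le]; rintro _ ⟨i, rfl⟩; exact hv i
  refine Submodule.eq_of_le_of_finrank_le hle ?_
  rw [finrank_span_eq_card hli, finrank_Wx]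
  simp

lemma snoc_span_eq_Wy {v : Fin (m + 1) → BiRing k n m} (hv : ∀ i, v i ∈ Wy k n m)
    (hli : LinearIndependent k v) : Submodule.span k (Set.range v) = Wy k n m := by
  haveI : FiniteDimensional k (Wy k n m) :=
    FiniteDimensional.span_of_finite k (Set.finite_range _)
  have hle : Submodule.span k (Set.range v) ≤ Wy k n m := by
    rw [Submodule.span_le]; rintro _ ⟨i, rfl⟩; exact hv i
  refine Submodule.eq_of_le_of_finrank_le hle ?_
  rw [finrank_span_eq_card hli, finrank_Wy]
  simp

lemma li_Lj (hli : LinearIndependent k (Sum.elim Lj L'j)) : LinearIndependent k Lj := by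
  have := hli.comp Sum.inl Sum.inl_injective
  rwa [Sum.elim_comp_inl] at this

lemma li_L'j (hli : LinearIndependent k (Sum.elim Lj L'j)) : LinearIndependent k L'j := by
  have := hli.comp Sum.inr Sum.inr_injective
  rwa [Sum.elim_comp_inr] at this

/-- The main transfer lemma: if `L` is a linear form of degree `(1,0)` not lying in the span
of the degree-`(1,0)` generators of a point ideal, then `L` is a nonzerodivisor modulo any
power of the point ideal. -/
lemma nzd_pow_point
    (h10 : ∀ a, BihomOfDeg (Lj a) (1, 0)) (h01 : ∀ b, BihomOfDeg (L'j b) (0, 1))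
    (hli : LinearIndependent k (Sum.elim Lj L'j))
    {L : BiRing k n m} (hL : L ∈ Wx k n m) (hLns : L ∉ Submodule.span k (Set.range Lj))
    (t : ℕ) (h : BiRing k n m)
    (hmul : L * h ∈ (Ideal.span (Set.range Lj ∪ Set.range L'j)) ^ t) :
    h ∈ (Ideal.span (Set.range Lj ∪ Set.range L'j)) ^ t := by
  classical
  haveI : FiniteDimensional k (Wy k n m) :=
    FiniteDimensional.span_of_finite k (Set.finite_range _)
  -- choose z in Wy outside the span of L'j
  have hltWy : Submodule.span k (Set.range L'j) < Wy k n m := by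
    apply Submodule.lt_of_le_of_finrank_lt_finrank
    · rw [Submodule.span_le]; rintro _ ⟨b, rfl⟩; exact bihom01_mem_Wy (h01 b)
    · rw [finrank_span_eq_card (li_L'j hli), finrank_Wy]
      simp
  obtain ⟨z, hzWy, hzns⟩ := SetLike.exists_of_lt hltWy
  -- the new family
  set F : Fin (n + 1) ⊕ Fin (m + 1) → BiRing k n m :=
    Sum.elim (Fin.snoc Lj L) (Fin.snoc L'j z) with hF
  have hmemF : ∀ i, F i ∈ Lin k n m := by
    rintro (a | b)
    · exact Wx_le_Lin (snoc_mem_Wx h10 hL a)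
    · exact Wy_le_Lin (snoc_mem_Wy h01 hzWy b)
  have hliF : LinearIndependent k F := by
    rw [hF, linearIndependent_sum]
    refine ⟨linearIndependent_fin_snoc.mpr ⟨li_Lj hli, hLns⟩,
      linearIndependent_fin_snoc.mpr ⟨li_L'j hli, hzns⟩, ?_⟩
    have h1 : Submodule.span k (Set.range (Fin.snoc Lj L : Fin (n+1) → BiRing k n m))
        ≤ Wx k n m := by
      rw [Submodule.span_le]; rintro _ ⟨i, rfl⟩; exact snoc_mem_Wx h10 hL i
    have h2 : Submodule.span k (Set.range (Fin.snoc L'j z : Fin (m+1) → BiRing k n m))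
        ≤ Wy k n m := by
      rw [Submodule.span_le]; rintro _ ⟨i, rfl⟩; exact snoc_mem_Wy h01 hzWy i
    exact disjoint_Wx_Wy.mono h1 h2
  obtain ⟨Φ, hΦ⟩ := exists_algEquiv F hmemF hliF
  -- the set of "variables" of the point ideal
  set S : Set (Fin (n + 1) ⊕ Fin (m + 1)) :=
    Set.range (fun a : Fin n => Sum.inl a.castSucc) ∪
      Set.range (fun b : Fin m => Sum.inr b.castSucc) with hS
  have himg : ⇑Φ '' (X '' S) = Set.range Lj ∪ Set.range L'j := by
    rw [hS, Set.image_union, Set.image_union]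
    congr 1
    · ext w
      constructor
      · rintro ⟨_, ⟨_, ⟨a, rfl⟩, rfl⟩, rfl⟩
        exact ⟨a, by simpa [hF] using (hΦ (Sum.inl a.castSucc)).symm⟩
      · rintro ⟨a, rfl⟩
        exact ⟨X (Sum.inl a.castSucc), ⟨_, ⟨a, rfl⟩, rfl⟩,
          by simpa [hF] using hΦ (Sum.inl a.castSucc)⟩
    · ext w
      constructor
      · rintro ⟨_, ⟨_, ⟨b, rfl⟩, rfl⟩, rfl⟩
        exact ⟨b, by simpa [hF] using (hΦ (Sum.inr b.castSucc)).symm⟩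
      · rintro ⟨b, rfl⟩
        exact ⟨X (Sum.inr b.castSucc), ⟨_, ⟨b, rfl⟩, rfl⟩,
          by simpa [hF] using hΦ (Sum.inr b.castSucc)⟩
  have hmap : Ideal.span (Set.range Lj ∪ Set.range L'j)
      = Ideal.map (Φ : BiRing k n m →+* BiRing k n m) (Ideal.span (X '' S)) := by
    rw [Ideal.map_span]
    congr 1
    rw [← himg]
    rfl
  have hmappow : (Ideal.span (Set.range Lj ∪ Set.range L'j)) ^ t
      = Ideal.map (Φ : BiRing k n m →+* BiRing k n m) ((Ideal.span (X '' S)) ^ t) := by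
    rw [hmap, Ideal.map_pow]
  rw [hmappow] at hmul ⊢
  rw [map_equiv_mem_iff] at hmul ⊢
  rw [map_mul] at hmul
  have hsymmL : Φ.symm L = X (Sum.inl (Fin.last n)) := by
    apply Φ.injective
    rw [Φ.apply_symm_apply, hΦ]
    simp [hF]
  rw [hsymmL] at hmul
  refine nzd_X_pow_span S (Sum.inl (Fin.last n)) ?_ t _ hmul
  rw [hS]
  rintro (⟨a, ha⟩ | ⟨b, hb⟩)
  · have := Sum.inl.inj ha
    exact (Fin.castSucc_lt_last a).ne this
  · exact Sum.inr_ne_inl hb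

end NZD

section Torsion

/-- The elementary "exchange" step: if `(f,g)` is a regular pair on `R/I` and `L` is a
nonzerodivisor on `R/I`, then no nonzero element of `R/(I,L)` is killed by both `f` and `g`. -/
lemma torsion_free {I : Ideal (BiRing k n m)} {f g L h : BiRing k n m}
    (hfNZD : ∀ z, f * z ∈ I → z ∈ I)
    (hgNZD : ∀ z, g * z ∈ I ⊔ Ideal.span {f} → z ∈ I ⊔ Ideal.span {f})
    (hLNZD : ∀ z, L * z ∈ I → z ∈ I)
    (hfh : f * h ∈ I ⊔ Ideal.span {L}) (hgh : g * h ∈ I ⊔ Ideal.span {L}) :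
    h ∈ I ⊔ Ideal.span {L} := by
  obtain ⟨a, haI, u, hu, hfh'⟩ := Submodule.mem_sup.mp hfh
  obtain ⟨c, rfl⟩ := Ideal.mem_span_singleton'.mp hu
  obtain ⟨a₂, ha₂I, u₂, hu₂, hgh'⟩ := Submodule.mem_sup.mp hgh
  obtain ⟨c₂, rfl⟩ := Ideal.mem_span_singleton'.mp hu₂
  have key : L * (g * c - f * c₂) = f * a₂ - g * a := by
    linear_combination g * hfh' - f * hgh'
  have hIw : g * c - f * c₂ ∈ I := by
    apply hLNZD
    rw [key]
    exact Submodule.sub_mem _ (Ideal.mul_mem_left _ _ ha₂I) (Ideal.mul_mem_left _ _ haI)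
  have hgc : g * c ∈ I ⊔ Ideal.span {f} := by
    have : g * c = (g * c - f * c₂) + c₂ * f := by ring
    rw [this]
    exact Submodule.add_mem _ (Submodule.mem_sup_left hIw)
      (Submodule.mem_sup_right (Ideal.mem_span_singleton'.mpr ⟨c₂, rfl⟩))
  obtain ⟨a₃, ha₃I, u₃, hu₃, hc'⟩ := Submodule.mem_sup.mp (hgNZD c hgc)
  obtain ⟨c₃, rfl⟩ := Ideal.mem_span_singleton'.mp hu₃
  have hstep : f * (h - c₃ * L) ∈ I := by
    have heq : f * (h - c₃ * L) = a + a₃ * L := by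
      linear_combination -hfh' - L * hc'
    rw [heq]
    exact Submodule.add_mem _ haI (Ideal.mul_mem_right _ _ ha₃I)
  have := hfNZD _ hstep
  have : h = (h - c₃ * L) + c₃ * L := by ring
  rw [this]
  exact Submodule.add_mem _ (Submodule.mem_sup_left (hfNZD _ hstep))
    (Submodule.mem_sup_right (Ideal.mem_span_singleton'.mpr ⟨c₃, rfl⟩))

end Torsion

section Avoid

lemma exists_avoid [Infinite k] (W : Submodule k (BiRing k n m)) [FiniteDimensional k W]
    {s : ℕ} (U : Fin s → Submodule k (BiRing k n m)) (hU : ∀ j, ¬ W ≤ U j) :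
    ∃ L, L ∈ W ∧ ∀ j, L ∉ U j := by
  by_contra hc
  push_neg at hc
  have hcover : ⋃ j, (((U j).comap W.subtype : Submodule k W) : Set W) = Set.univ := by
    ext v
    simp only [Set.mem_iUnion, Set.mem_univ, iff_true, SetLike.mem_coe, Submodule.mem_comap,
      Submodule.subtype_apply]
    exact hc (v : BiRing k n m) v.2
  obtain ⟨j, hj⟩ := Subspace.exists_eq_top_of_iUnion_eq_univ hcover
  exact hU j (Submodule.comap_subtype_eq_top.mp hj)

lemma not_Wx_le_span {Lj : Fin n → BiRing k n m} (h10 : ∀ a, BihomOfDeg (Lj a) (1, 0))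
    (hliLj : LinearIndependent k Lj) : ¬ Wx k n m ≤ Submodule.span k (Set.range Lj) := by
  haveI : FiniteDimensional k (Wx k n m) :=
    FiniteDimensional.span_of_finite k (Set.finite_range _)
  refine (Submodule.lt_of_le_of_finrank_lt_finrank ?_ ?_).not_ge
  · rw [Submodule.span_le]; rintro _ ⟨a, rfl⟩; exact bihom10_mem_Wx (h10 a)
  · rw [finrank_span_eq_card hliLj, finrank_Wx]; simp

lemma not_Wy_le_span {L'j : Fin m → BiRing k n m} (h01 : ∀ b, BihomOfDeg (L'j b) (0, 1))
    (hliL'j : LinearIndependent k L'j) : ¬ Wy k n m ≤ Submodule.span k (Set.range L'j) := by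
  haveI : FiniteDimensional k (Wy k n m) :=
    FiniteDimensional.span_of_finite k (Set.finite_range _)
  refine (Submodule.lt_of_le_of_finrank_lt_finrank ?_ ?_).not_ge
  · rw [Submodule.span_le]; rintro _ ⟨b, rfl⟩; exact bihom01_mem_Wy (h01 b)
  · rw [finrank_span_eq_card hliL'j, finrank_Wy]; simp

lemma x_vars_mem {Lj : Fin n → BiRing k n m} {L : BiRing k n m}
    (h10 : ∀ a, BihomOfDeg (Lj a) (1, 0)) (hliLj : LinearIndependent k Lj)
    (hL : L ∈ Wx k n m) (hLns : L ∉ Submodule.span k (Set.range Lj))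
    (Q : Ideal (BiRing k n m)) (hLjQ : ∀ a, Lj a ∈ Q) (hLQ : L ∈ Q) :
    ∀ i, X (Sum.inl i) ∈ Q := by
  intro i
  have hsp : Submodule.span k (Set.range (Fin.snoc Lj L : Fin (n+1) → BiRing k n m))
      = Wx k n m :=
    snoc_span_eq_Wx (snoc_mem_Wx h10 hL) (linearIndependent_fin_snoc.mpr ⟨hliLj, hLns⟩)
  have hle : Submodule.span k (Set.range (Fin.snoc Lj L : Fin (n+1) → BiRing k n m))
      ≤ Submodule.restrictScalars k Q := by
    rw [Submodule.span_le]
    rintro _ ⟨a, rfl⟩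
    refine Fin.lastCases ?_ ?_ a
    · rw [Fin.snoc_last]; exact hLQ
    · intro a'; rw [Fin.snoc_castSucc]; exact hLjQ a'
  have hXi : X (Sum.inl i) ∈ Wx k n m := Submodule.subset_span ⟨i, rfl⟩
  rw [← hsp] at hXi
  exact hle hXi

lemma y_vars_mem {L'j : Fin m → BiRing k n m} {L' : BiRing k n m}
    (h01 : ∀ b, BihomOfDeg (L'j b) (0, 1)) (hliL'j : LinearIndependent k L'j)
    (hL' : L' ∈ Wy k n m) (hL'ns : L' ∉ Submodule.span k (Set.range L'j))
    (Q : Ideal (BiRing k n m)) (hL'jQ : ∀ b, L'j b ∈ Q) (hL'Q : L' ∈ Q) :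
    ∀ i, X (Sum.inr i) ∈ Q := by
  intro i
  have hsp : Submodule.span k (Set.range (Fin.snoc L'j L' : Fin (m+1) → BiRing k n m))
      = Wy k n m :=
    snoc_span_eq_Wy (snoc_mem_Wy h01 hL') (linearIndependent_fin_snoc.mpr ⟨hliL'j, hL'ns⟩)
  have hle : Submodule.span k (Set.range (Fin.snoc L'j L' : Fin (m+1) → BiRing k n m))
      ≤ Submodule.restrictScalars k Q := by
    rw [Submodule.span_le]
    rintro _ ⟨b, rfl⟩
    refine Fin.lastCases ?_ ?_ b
    · rw [Fin.snoc_last]; exact hL'Q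
    · intro b'; rw [Fin.snoc_castSucc]; exact hL'jQ b'
  have hXi : X (Sum.inr i) ∈ Wy k n m := Submodule.subset_span ⟨i, rfl⟩
  rw [← hsp] at hXi
  exact hle hXi

end Avoid

end StmtAux

open StmtAux

/-- Lemma 2.1(ii): if the fat point scheme `Z` is ACM, then
there exist a bihomogeneous form `L` of degree `(1,0)` and a bihomogeneous form
`L'` of degree `(0,1)` whose images form a regular sequence of length two on
`R/I_Z`. -/
theorem stmt1 [IsAlgClosed k] [CharZero k] {s : ℕ}
    (P : Fin s → Ideal (BiRing k n m)) (mult : Fin s → ℕ)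
    (hP : ∀ j, IsPointIdeal (P j)) (hinj : Function.Injective P)
    (hmult : ∀ j, 1 ≤ mult j)
    (hACM : IsACM (fatIdeal P mult)) :
    ∃ L L' : BiRing k n m,
      BihomOfDeg L (1, 0) ∧ BihomOfDeg L' (0, 1) ∧
      IsRegularPair (fatIdeal P mult) L L' := by
  classical
  obtain ⟨f, g, hf0, hg0, hfNZD, hgNZD, hproper⟩ := hACM
  rcases Nat.eq_zero_or_pos s with rfl | hs
  · exfalso
    apply hproper
    have : fatIdeal P mult = ⊤ := by
      rw [fatIdeal]
      exact iInf_of_empty _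
    rw [this, top_sup_eq]
  choose Lj L'j h10 h01 hli hspan using hP
  haveI : Infinite k := inferInstance
  haveI : FiniteDimensional k (Wx k n m) :=
    FiniteDimensional.span_of_finite k (Set.finite_range _)
  haveI : FiniteDimensional k (Wy k n m) :=
    FiniteDimensional.span_of_finite k (Set.finite_range _)
  -- choose the degree (1,0) form L
  obtain ⟨L, hLWx, hLns⟩ := exists_avoid (Wx k n m)
    (fun j => Submodule.span k (Set.range (Lj j)))
    (fun j => not_Wx_le_span (h10 j) (li_Lj (hli j)))
  -- choose the degree (0,1) form L'
  obtain ⟨L', hL'Wy, hL'ns⟩ := exists_avoid (Wy k n m)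
    (fun j => Submodule.span k (Set.range (L'j j)))
    (fun j => not_Wy_le_span (h01 j) (li_L'j (hli j)))
  set I := fatIdeal P mult with hI
  -- L is a nonzerodivisor mod I
  have hLNZD : ∀ h, L * h ∈ I → h ∈ I := by
    intro h hh
    rw [hI, fatIdeal, Ideal.mem_iInf] at hh ⊢
    intro j
    have hj := hh j
    rw [hspan j] at hj ⊢
    exact nzd_pow_point (h10 j) (h01 j) (hli j) hLWx (hLns j) (mult j) h hj
  set J := I ⊔ Ideal.span {L} with hJ
  -- L' is a nonzerodivisor mod J
  have hL'NZD : ∀ h, L' * h ∈ J → h ∈ J := by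
    intro h hh
    by_contra hhJ
    have hx : (Submodule.Quotient.mk h : BiRing k n m ⧸ J) ≠ 0 :=
      fun h0 => hhJ ((Submodule.Quotient.mk_eq_zero _).mp h0)
    obtain ⟨Q, hQass, hQle⟩ :=
      exists_le_isAssociatedPrime_of_isNoetherianRing (BiRing k n m) _ hx
    have hQprime : Q.IsPrime := hQass.isPrime
    have hmemQ : ∀ r : BiRing k n m, r * h ∈ J → r ∈ Q := by
      intro r hr
      apply hQle
      rw [Submodule.mem_colon_singleton, ← Submodule.Quotient.mk_smul, Submodule.mem_bot,
        Submodule.Quotient.mk_eq_zero]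
      simpa [smul_eq_mul] using hr
    have hJQ : J ≤ Q := fun z hz => hmemQ z (Ideal.mul_mem_right h J hz)
    have hLQ : L ∈ Q := hJQ (Submodule.mem_sup_right (Ideal.subset_span rfl))
    have hL'Q : L' ∈ Q := hmemQ L' hh
    -- find a point ideal contained in Q
    have hprodI : (∏ j, (P j) ^ (mult j)) ≤ I := by
      rw [hI, fatIdeal]
      exact le_iInf fun j => Ideal.prod_le_inf.trans (Finset.inf_le (Finset.mem_univ j))
    have hprodQ : (∏ j, (P j) ^ (mult j)) ≤ Q :=
      hprodI.trans ((le_sup_left : I ≤ J).trans hJQ)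
    obtain ⟨j₀, -, hPQ'⟩ := (Ideal.IsPrime.prod_le hQprime).mp hprodQ
    haveI := hQprime
    have hPQ : P j₀ ≤ Q := Ideal.IsPrime.le_of_pow_le hPQ'
    have hLjQ : ∀ a, Lj j₀ a ∈ Q := fun a =>
      hPQ (by rw [hspan j₀]; exact Ideal.subset_span (Or.inl ⟨a, rfl⟩))
    have hL'jQ : ∀ b, L'j j₀ b ∈ Q := fun b =>
      hPQ (by rw [hspan j₀]; exact Ideal.subset_span (Or.inr ⟨b, rfl⟩))
    have hxv : ∀ i, X (Sum.inl i) ∈ Q :=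
      x_vars_mem (h10 j₀) (li_Lj (hli j₀)) hLWx (hLns j₀) Q hLjQ hLQ
    have hyv : ∀ i, X (Sum.inr i) ∈ Q :=
      y_vars_mem (h01 j₀) (li_L'j (hli j₀)) hL'Wy (hL'ns j₀) Q hL'jQ hL'Q
    have hker : ∀ r : BiRing k n m, constantCoeff r = 0 → r ∈ Q := by
      intro r hr
      refine Ideal.span_le.mpr ?_ (StmtAux.mem_span_X_of_constantCoeff hr)
      rintro _ ⟨i, rfl⟩
      rcases i with i | i
      · exact hxv i
      · exact hyv i
    -- contradiction via torsion-freeness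
    obtain ⟨-, x', hx'⟩ := isAssociatedPrime_iff.mp hQass
    obtain ⟨h', rfl⟩ := Submodule.Quotient.mk_surjective _ x'
    have hfg : ∀ r : BiRing k n m, r ∈ Q → r * h' ∈ J := by
      intro r hr
      rw [hx', Submodule.mem_colon_singleton, ← Submodule.Quotient.mk_smul, Submodule.mem_bot,
        Submodule.Quotient.mk_eq_zero] at hr
      simpa [smul_eq_mul] using hr
    have hh'J : h' ∈ J :=
      torsion_free hfNZD hgNZD hLNZD (hfg f (hker f hf0)) (hfg g (hker g hg0))
    have hzero : (Submodule.Quotient.mk h' : BiRing k n m ⧸ J) = 0 :=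
      (Submodule.Quotient.mk_eq_zero _).mpr hh'J
    rw [hzero] at hx'
    have hQtop : Q = ⊤ := by
      rw [hx', Submodule.colon_singleton_zero]
    exact hQprime.ne_top hQtop
  -- properness
  have hprop : I ⊔ Ideal.span {L, L'} ≠ ⊤ := by
    intro htop
    have hle : I ⊔ Ideal.span {L, L'}
        ≤ RingHom.ker (constantCoeff : BiRing k n m →+* k) := by
      apply sup_le
      · have hj₀ : (⟨0, hs⟩ : Fin s) = ⟨0, hs⟩ := rfl
        calc I ≤ (P ⟨0, hs⟩) ^ (mult ⟨0, hs⟩) := by rw [hI, fatIdeal]; exact iInf_le _ _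
        _ ≤ P ⟨0, hs⟩ := Ideal.pow_le_self (by have := hmult ⟨0, hs⟩; omega)
        _ ≤ RingHom.ker (constantCoeff : BiRing k n m →+* k) := by
            rw [hspan ⟨0, hs⟩]
            apply Ideal.span_le.mpr
            rintro _ (⟨a, rfl⟩ | ⟨b, rfl⟩)
            · exact bihom10_constantCoeff (h10 _ a)
            · exact bihom01_constantCoeff (h01 _ b)
      · apply Ideal.span_le.mpr
        rintro w (rfl | rfl)
        · exact bihom10_constantCoeff (mem_Wx_bihom hLWx)
        · exact bihom01_constantCoeff (mem_Wy_bihom hL'Wy)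
    rw [htop] at hle
    have h1 : (1 : BiRing k n m) ∈ RingHom.ker (constantCoeff : BiRing k n m →+* k) :=
      hle trivial
    rw [RingHom.mem_ker] at h1
    simp at h1
  exact ⟨L, L', mem_Wx_bihom hLWx, mem_Wy_bihom hL'Wy, hLNZD, hL'NZD, hprop⟩
end
end

section
/- Let Z = m_1P_1 + ⋯ + m_sP_s be a fat point scheme in ℙⁿ×ℙᵐ, fix i, and let Z' = m_1P_1 + ⋯ + (m_i−1)P_i + ⋯ + m_sP_s. Then there exist finitely many bihomogeneous forms F_1,…,F_p ∈ R, each of which is a separator of P_i of multiplicity m_i, such that the ideal I_{Z'}/I_Z of R/I_Z is generated by the residue classes of F_1,…,F_p. -/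
/-!
Formalization of statements from "Separators of fat points in ℙⁿ×ℙᵐ"
(Guardo–Van Tuyl).  The bigraded coordinate ring `R = k[x₀,…,xₙ,y₀,…,y_m]` of
`ℙⁿ×ℙᵐ` is modelled as `MvPolynomial (Fin (n+1) ⊕ Fin (m+1)) k`, where the
variable `X (Sum.inl i)` is `xᵢ` (degree `(1,0)`) and `X (Sum.inr j)` is `yⱼ`
(degree `(0,1)`); bihomogeneity is weighted homogeneity for the weight `biWeight`.
-/

open MvPolynomial

noncomputable section

variable {k : Type} [Field k] {n m : ℕ}

/-- `F` is a separator of the point `Pᵢ` of multiplicity `mᵢ`, where `IZ = I_Z`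
and `IZ' = I_{Z'}`: a bihomogeneous form lying in `I_{Z'} \ I_Z`
(equivalently `F ∈ I_{Pᵢ}^{mᵢ-1} \ I_{Pᵢ}^{mᵢ}` and `F ∈ I_{Pⱼ}^{mⱼ}` for `j ≠ i`). -/
def IsSeparator (IZ IZ' : Ideal (BiRing k n m)) (F : BiRing k n m) : Prop :=
  (∃ d, BihomOfDeg F d) ∧ F ∈ IZ' ∧ F ∉ IZ

/-- `F₁,…,F_p` is a set of minimal separators of `Pᵢ` of multiplicity `mᵢ`:
each `Fⱼ` is a (bihomogeneous) separator, their residue classes generate the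
ideal `I_{Z'}/I_Z` of `R/I_Z` (equivalently `I_Z + (F₁,…,F_p) = I_{Z'}`), and no
fewer than `p` bihomogeneous forms have classes generating `I_{Z'}/I_Z`. -/
def IsMinSepSet (IZ IZ' : Ideal (BiRing k n m)) {p : ℕ}
    (F : Fin p → BiRing k n m) : Prop :=
  (∀ j, IsSeparator IZ IZ' (F j)) ∧
  IZ ⊔ Ideal.span (Set.range F) = IZ' ∧
  ∀ q : ℕ, q < p → ∀ G : Fin q → BiRing k n m,
    (∀ j, ∃ d, BihomOfDeg (G j) d) → IZ ⊔ Ideal.span (Set.range G) ≠ IZ'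


section Aux

variable {k : Type} [Field k] {n m : ℕ}

local notation "𝒜" => weightedHomogeneousSubmodule k (biWeight n m)

instance biGraded : GradedAlgebra (𝒜 : ℕ × ℕ → Submodule k (BiRing k n m)) :=
  weightedGradedAlgebra k (biWeight n m)

lemma pow_isHomogeneous {I : Ideal (BiRing k n m)}
    (h : I.IsHomogeneous 𝒜) (t : ℕ) : (I ^ t).IsHomogeneous 𝒜 := by
  induction t with
  | zero => simpa using Ideal.IsHomogeneous.top 𝒜
  | succ t ih => rw [pow_succ]; exact ih.mul h

lemma pointIdeal_isHomogeneous {I : Ideal (BiRing k n m)}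
    (h : IsPointIdeal I) : I.IsHomogeneous 𝒜 := by
  obtain ⟨L, L', hL, hL', -, rfl⟩ := h
  refine Ideal.homogeneous_span 𝒜 _ fun x hx => ?_
  rcases hx with hx | hx
  · obtain ⟨a, rfl⟩ := hx
    exact ⟨(1, 0), (mem_weightedHomogeneousSubmodule _ _ _ _).2 (hL a)⟩
  · obtain ⟨b, rfl⟩ := hx
    exact ⟨(0, 1), (mem_weightedHomogeneousSubmodule _ _ _ _).2 (hL' b)⟩

end Aux

/-- Lemma 3.3: for `Z' ⊆ Z` as in Convention 3.1 there exist
finitely many bihomogeneous forms `F₁,…,F_p`, each a separator of `Pᵢ` of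
multiplicity `mᵢ`, whose residue classes generate the ideal `I_{Z'}/I_Z` of
`R/I_Z`. -/
theorem stmt3 [IsAlgClosed k] [CharZero k] {s : ℕ}
    (P : Fin s → Ideal (BiRing k n m)) (mult : Fin s → ℕ)
    (hP : ∀ j, IsPointIdeal (P j)) (hinj : Function.Injective P)
    (hmult : ∀ j, 1 ≤ mult j) (i : Fin s)
    (IZ IZ' : Ideal (BiRing k n m))
    (hIZ : IZ = fatIdeal P mult)
    (hIZ' : IZ' = fatIdeal P (Function.update mult i (mult i - 1))) :
    ∃ (p : ℕ) (F : Fin p → BiRing k n m),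
      (∀ j, IsSeparator IZ IZ' (F j)) ∧
      IZ ⊔ Ideal.span (Set.range F) = IZ' := by
  
  classical
  -- the grading
  -- Step 1 : IZ ≤ IZ'
  have hle : IZ ≤ IZ' := by
    rw [hIZ, hIZ']
    refine le_iInf fun j => (iInf_le _ j).trans ?_
    rcases eq_or_ne j i with rfl | hji
    · rw [Function.update_self]
      exact Ideal.pow_le_pow_right (Nat.sub_le _ _)
    · rw [Function.update_of_ne hji]
  -- Step 2 : IZ' is a homogeneous ideal
  have hhom : IZ'.IsHomogeneous (weightedHomogeneousSubmodule k (biWeight n m)) := by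
    rw [hIZ']
    exact Ideal.IsHomogeneous.iInf fun j =>
      pow_isHomogeneous (pointIdeal_isHomogeneous (hP j)) _
  -- Step 3 : IZ' is generated by a set of homogeneous elements
  obtain ⟨S, hS⟩ := (Ideal.IsHomogeneous.iff_exists _ _).mp hhom
  -- Step 4 : IZ' is finitely generated
  obtain ⟨G, hG⟩ := (IsNoetherian.noetherian IZ' : IZ'.FG)
  -- every generator g ∈ G lies in the span of a finite subset of (↑) '' S
  have hGmem : ∀ g ∈ G, ∃ T : Finset (BiRing k n m),
      ↑T ⊆ ((↑) '' S : Set (BiRing k n m)) ∧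
      g ∈ Ideal.span (T : Set (BiRing k n m)) := by
    intro g hg
    have : g ∈ Ideal.span ((↑) '' S : Set (BiRing k n m)) := by
      rw [← hS, ← hG]; exact Ideal.subset_span hg
    exact Submodule.mem_span_finite_of_mem_span this
  choose T hTsub hTmem using hGmem
  -- assemble the finite homogeneous generating set
  set U : Finset (BiRing k n m) := G.attach.biUnion (fun g => T g.1 g.2) with hU
  have hUsub : (U : Set (BiRing k n m)) ⊆ ((↑) '' S : Set (BiRing k n m)) := by
    intro x hx
    simp only [hU, Finset.coe_biUnion, Set.mem_iUnion, Finset.mem_coe] at hx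
    obtain ⟨g, _, hx⟩ := hx
    exact hTsub g.1 g.2 hx
  have hUspan : Ideal.span (U : Set (BiRing k n m)) = IZ' := by
    apply le_antisymm
    · rw [hS]
      exact Ideal.span_mono hUsub
    · rw [← hG]
      refine Ideal.span_le.2 fun g hg => ?_
      refine Ideal.span_mono ?_ (hTmem g hg)
      intro x hx
      simp only [hU, Finset.coe_biUnion, Set.mem_iUnion, Finset.mem_coe]
      exact ⟨⟨g, hg⟩, Finset.mem_attach _ _, hx⟩
  -- homogeneity of the elements of U
  have hUhomog : ∀ x ∈ U, ∃ d, BihomOfDeg x d := by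
    intro x hx
    obtain ⟨y, -, rfl⟩ := hUsub hx
    obtain ⟨d, hd⟩ := y.2
    exact ⟨d, (mem_weightedHomogeneousSubmodule _ _ _ _).1 hd⟩
  -- Step 5 : discard the generators lying in IZ
  set V : Finset (BiRing k n m) := U.filter (fun x => x ∉ IZ) with hV
  refine ⟨V.card, fun j => (V.equivFin.symm j : V), ?_, ?_⟩
  · intro j
    have hjV : ((V.equivFin.symm j : V) : BiRing k n m) ∈ V := (V.equivFin.symm j).2
    have hjU : ((V.equivFin.symm j : V) : BiRing k n m) ∈ U :=
      Finset.mem_of_mem_filter _ hjV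
    refine ⟨hUhomog _ hjU, ?_, ?_⟩
    · rw [← hUspan]; exact Ideal.subset_span hjU
    · exact (Finset.mem_filter.1 hjV).2
  · have hrange : Set.range (fun j => ((V.equivFin.symm j : V) : BiRing k n m))
        = (V : Set (BiRing k n m)) := by
      ext x
      constructor
      · rintro ⟨j, rfl⟩; exact (V.equivFin.symm j).2
      · intro hx; exact ⟨V.equivFin ⟨x, hx⟩, by simp⟩
    rw [hrange]
    apply le_antisymm
    · refine sup_le hle ?_
      rw [← hUspan]
      exact Ideal.span_mono (Finset.coe_subset.2 (Finset.filter_subset _ _))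
    · rw [← hUspan]
      refine Ideal.span_le.2 fun x hx => ?_
      by_cases hxIZ : x ∈ IZ
      · exact Ideal.mem_sup_left hxIZ
      · exact Ideal.mem_sup_right
          (Ideal.subset_span (Finset.mem_filter.2 ⟨hx, hxIZ⟩))
end
end

section
/- Let Z, Z' be as above and suppose {F_1,…,F_p}, with deg F_i = (d_{i1},d_{i2}), is a good set of minimal separators of the point P_i of multiplicity m_i. Then for every t = (t_1,t_2) ∈ ℕ², the classes of x_0^{t_1−d_{i1}} y_0^{t_2−d_{i2}} F_i, taken over those i with d_{i1} ≤ t_1 and d_{i2} ≤ t_2, form a k-vector space basis of (I_{Z'}/I_Z)_t. -/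
/-!
Formalization of statements from "Separators of fat points in ℙⁿ×ℙᵐ"
(Guardo–Van Tuyl).  The bigraded coordinate ring `R = k[x₀,…,xₙ,y₀,…,y_m]` of
`ℙⁿ×ℙᵐ` is modelled as `MvPolynomial (Fin (n+1) ⊕ Fin (m+1)) k`, where the
variable `X (Sum.inl i)` is `xᵢ` (degree `(1,0)`) and `X (Sum.inr j)` is `yⱼ`
(degree `(0,1)`); bihomogeneity is weighted homogeneity for the weight `biWeight`.
-/

open MvPolynomial

noncomputable section

variable {k : Type} [Field k] {n m : ℕ}

/-- A family `F₁,…,F_p` of forms with `deg Fⱼ = d j` is a *good* set (of minimal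
separators) if for every `t ∈ ℕ²` the classes of `x₀^{t₁-dⱼ₁} y₀^{t₂-dⱼ₂} Fⱼ`
(over those `j` with `d j ⪯ t` componentwise) are linearly independent in
`(I_{Z'}/I_Z)_t`; i.e. any `k`-linear combination lying in `I_Z` has all its
coefficients equal to zero. -/
def IsGoodSepSet {p : ℕ} (IZ : Ideal (BiRing k n m)) (F : Fin p → BiRing k n m)
    (d : Fin p → ℕ × ℕ) : Prop :=
  ∀ t : ℕ × ℕ, ∀ c : Fin p → k,
    (∑ j ∈ Finset.univ.filter (fun j => (d j).1 ≤ t.1 ∧ (d j).2 ≤ t.2),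
        c j • (X (Sum.inl 0) ^ (t.1 - (d j).1) * X (Sum.inr 0) ^ (t.2 - (d j).2) * F j))
      ∈ IZ →
    ∀ j : Fin p, (d j).1 ≤ t.1 → (d j).2 ≤ t.2 → c j = 0


namespace SepAux


variable (n m) in
lemma biWeight_fst_add_snd (v : Fin (n+1) ⊕ Fin (m+1)) :
    (biWeight n m v).1 + (biWeight n m v).2 = 1 := by
  cases v <;> rfl

lemma weight_fst (σf : (Fin (n+1) ⊕ Fin (m+1)) →₀ ℕ) :
    (Finsupp.weight (biWeight n m) σf).1
      = ∑ v ∈ σf.support, σf v * (biWeight n m v).1 := by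
  rw [Finsupp.weight_apply, Finsupp.sum, Prod.fst_sum]
  simp [Prod.smul_def]

lemma weight_snd (σf : (Fin (n+1) ⊕ Fin (m+1)) →₀ ℕ) :
    (Finsupp.weight (biWeight n m) σf).2
      = ∑ v ∈ σf.support, σf v * (biWeight n m v).2 := by
  rw [Finsupp.weight_apply, Finsupp.sum, Prod.snd_sum]
  simp [Prod.smul_def]

lemma weight_fst_add_snd (σf : (Fin (n+1) ⊕ Fin (m+1)) →₀ ℕ) :
    (Finsupp.weight (biWeight n m) σf).1 + (Finsupp.weight (biWeight n m) σf).2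
      = σf.degree := by
  rw [weight_fst, weight_snd, ← Finset.sum_add_distrib, Finsupp.degree]
  refine Finset.sum_congr rfl fun v _ => ?_
  rw [← Nat.mul_add, biWeight_fst_add_snd, Nat.mul_one]

lemma degree_single (v : Fin (n+1) ⊕ Fin (m+1)) (c : ℕ) :
    (Finsupp.single v c).degree = c := by
  rw [Finsupp.degree_eq_weight_one]
  simp [Finsupp.weight_apply, Finsupp.sum_single_index]

lemma degree_add (a b : (Fin (n+1) ⊕ Fin (m+1)) →₀ ℕ) :
    (a + b).degree = a.degree + b.degree := by
  simp only [Finsupp.degree_eq_weight_one, map_add]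

lemma weight_single_one (v : Fin (n+1) ⊕ Fin (m+1)) :
    Finsupp.weight (biWeight n m) (Finsupp.single v 1) = biWeight n m v := by
  rw [Finsupp.weight_apply, Finsupp.sum_single_index] <;> simp

lemma eq_single_of_degree_one {σf : (Fin (n+1) ⊕ Fin (m+1)) →₀ ℕ}
    (h : σf.degree = 1) : ∃ v, σf = Finsupp.single v 1 := by
  have hne : σf ≠ 0 := by
    intro h0; rw [h0] at h; simp at h
  obtain ⟨v, hv⟩ := Finsupp.support_nonempty_iff.mpr hne
  have hv1 : σf v ≠ 0 := Finsupp.mem_support_iff.mp hv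
  have hle : σf v ≤ 1 := by have := Finsupp.le_degree v σf; omega
  have hv1' : σf v = 1 := le_antisymm hle (Nat.one_le_iff_ne_zero.mpr hv1)
  have hsplit := Finsupp.single_add_erase v σf
  have hdeg : (Finsupp.single v (σf v)).degree + (σf.erase v).degree = 1 := by
    rw [← degree_add, hsplit, h]
  rw [degree_single, hv1'] at hdeg
  have : (σf.erase v).degree = 0 := by omega
  have herase : σf.erase v = 0 := (Finsupp.degree_eq_zero_iff _).mp this
  refine ⟨v, ?_⟩
  rw [← hsplit, herase, add_zero, hv1']

/-- the x-variables -/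
def xs (k : Type) [Field k] (n m : ℕ) : Fin (n+1) → BiRing k n m :=
  fun i => X (Sum.inl i)

def ys (k : Type) [Field k] (n m : ℕ) : Fin (m+1) → BiRing k n m :=
  fun j => X (Sum.inr j)

lemma mem_span_xs {A : BiRing k n m} (hA : BihomOfDeg A (1, 0)) :
    A ∈ Submodule.span k (Set.range (xs k n m)) := by
  rw [← A.support_sum_monomial_coeff]
  refine Submodule.sum_mem _ fun σ hσ => ?_
  have hc : coeff σ A ≠ 0 := Finsupp.mem_support_iff.mp hσ
  have hw : Finsupp.weight (biWeight n m) σ = (1, 0) := hA hc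
  have hdeg : σ.degree = 1 := by
    have := weight_fst_add_snd σ; rw [hw] at this; omega
  obtain ⟨v, rfl⟩ := eq_single_of_degree_one hdeg
  have hwv : biWeight n m v = (1, 0) := by rw [← weight_single_one v, hw]
  obtain i | j := v
  · have : monomial (Finsupp.single (Sum.inl i) 1) (coeff (Finsupp.single (Sum.inl i) 1) A)
        = (coeff (Finsupp.single (Sum.inl i) 1) A) • xs k n m i := by
      rw [xs, smul_eq_C_mul, C_mul_X_eq_monomial]
    rw [this]
    exact Submodule.smul_mem _ _ (Submodule.subset_span ⟨i, rfl⟩)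
  · exact absurd hwv (by simp [biWeight])

lemma mem_span_ys {A : BiRing k n m} (hA : BihomOfDeg A (0, 1)) :
    A ∈ Submodule.span k (Set.range (ys k n m)) := by
  rw [← A.support_sum_monomial_coeff]
  refine Submodule.sum_mem _ fun σ hσ => ?_
  have hc : coeff σ A ≠ 0 := Finsupp.mem_support_iff.mp hσ
  have hw : Finsupp.weight (biWeight n m) σ = (0, 1) := hA hc
  have hdeg : σ.degree = 1 := by
    have := weight_fst_add_snd σ; rw [hw] at this; omega
  obtain ⟨v, rfl⟩ := eq_single_of_degree_one hdeg
  have hwv : biWeight n m v = (0, 1) := by rw [← weight_single_one v, hw]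
  obtain i | j := v
  · exact absurd hwv (by simp [biWeight])
  · have : monomial (Finsupp.single (Sum.inr j) 1) (coeff (Finsupp.single (Sum.inr j) 1) A)
        = (coeff (Finsupp.single (Sum.inr j) 1) A) • ys k n m j := by
      rw [ys, smul_eq_C_mul, C_mul_X_eq_monomial]
    rw [this]
    exact Submodule.smul_mem _ _ (Submodule.subset_span ⟨j, rfl⟩)

/-- generic one-dimensional complement argument -/
lemma span_dim_arg {q : ℕ} (V : Submodule k (BiRing k n m))
    (bs : Fin (q+1) → BiRing k n m) (hbs : LinearIndependent k bs)
    (hV : V = Submodule.span k (Set.range bs))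
    (Lf : Fin q → BiRing k n m) (hLf : LinearIndependent k Lf)
    (hLV : ∀ a, Lf a ∈ V) (x0 : BiRing k n m) (hx0V : x0 ∈ V)
    (hx0W : x0 ∉ Submodule.span k (Set.range Lf)) {A : BiRing k n m}
    (hAV : A ∈ V) :
    ∃ c : k, A - c • x0 ∈ Submodule.span k (Set.range Lf) := by
  classical
  set W := Submodule.span k (Set.range Lf) with hW
  have hx0ne : x0 ≠ 0 := by
    intro h; exact hx0W (h ▸ Submodule.zero_mem W)
  have hWV : W ≤ V := Submodule.span_le.mpr (Set.range_subset_iff.mpr hLV)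
  have hfinV : FiniteDimensional k V := by
    rw [hV]; exact FiniteDimensional.span_of_finite k (Set.finite_range _)
  have hfinW : FiniteDimensional k W :=
    FiniteDimensional.span_of_finite k (Set.finite_range _)
  have hfinX : FiniteDimensional k (Submodule.span k {x0}) :=
    FiniteDimensional.span_of_finite k (Set.finite_singleton _)
  have hrV : Module.finrank k V = q + 1 := by
    rw [hV, finrank_span_eq_card hbs, Fintype.card_fin]
  have hrW : Module.finrank k W = q := by
    rw [hW, finrank_span_eq_card hLf, Fintype.card_fin]
  have hinf : W ⊓ Submodule.span k {x0} = ⊥ := by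
    rw [eq_bot_iff]
    rintro z ⟨hzW, hzX⟩
    obtain ⟨c, rfl⟩ := Submodule.mem_span_singleton.mp hzX
    rcases eq_or_ne c 0 with rfl | hc
    · simpa using Submodule.zero_mem (⊥ : Submodule k (BiRing k n m))
    · exact absurd (by simpa [smul_smul, inv_mul_cancel₀ hc] using
        Submodule.smul_mem W c⁻¹ hzW) hx0W
  have hsup : Module.finrank k ↥(W ⊔ Submodule.span k {x0}) = q + 1 := by
    have := Submodule.finrank_sup_add_finrank_inf_eq W (Submodule.span k {x0})
    rw [hinf, finrank_bot, finrank_span_singleton hx0ne, hrW] at this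
    omega
  have hle : W ⊔ Submodule.span k {x0} ≤ V :=
    sup_le hWV ((Submodule.span_singleton_le_iff_mem _ _).mpr hx0V)
  have hVeq : W ⊔ Submodule.span k {x0} = V :=
    Submodule.eq_of_le_of_finrank_le hle (by rw [hrV, hsup])
  have hA' : A ∈ W ⊔ Submodule.span k {x0} := hVeq ▸ hAV
  obtain ⟨u, hu, z, hz, huz⟩ := Submodule.mem_sup.mp hA'
  obtain ⟨c, rfl⟩ := Submodule.mem_span_singleton.mp hz
  exact ⟨c, by rw [← huz]; simpa using hu⟩



instance : Finsupp.NonTorsionWeight ℕ (biWeight n m) :=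
  Finsupp.nonTorsionWeight_of ℕ _ (by rintro (i | j) <;> simp [biWeight, Prod.ext_iff])

lemma eq_C_of_deg00 {A : BiRing k n m} (hA : BihomOfDeg A (0, 0)) :
    A = C (coeff 0 A) := by
  ext σ
  rcases eq_or_ne σ 0 with rfl | hσ
  · simp
  · rw [coeff_C, if_neg (Ne.symm hσ)]
    by_contra h
    exact hσ ((Finsupp.weight_eq_zero_iff_eq_zero (biWeight n m)).mp (hA h))

lemma exists_inl_ne_zero {σf : (Fin (n+1) ⊕ Fin (m+1)) →₀ ℕ}
    (h : (Finsupp.weight (biWeight n m) σf).1 ≠ 0) :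
    ∃ i : Fin (n+1), σf (Sum.inl i) ≠ 0 := by
  by_contra hcon
  push_neg at hcon
  refine h ?_
  rw [weight_fst]
  refine Finset.sum_eq_zero fun v _ => ?_
  obtain i | j := v
  · rw [hcon i, zero_mul]
  · simp [biWeight]

lemma exists_inr_ne_zero {σf : (Fin (n+1) ⊕ Fin (m+1)) →₀ ℕ}
    (h : (Finsupp.weight (biWeight n m) σf).2 ≠ 0) :
    ∃ j : Fin (m+1), σf (Sum.inr j) ≠ 0 := by
  by_contra hcon
  push_neg at hcon
  refine h ?_
  rw [weight_snd]
  refine Finset.sum_eq_zero fun v _ => ?_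
  obtain i | j := v
  · simp [biWeight]
  · rw [hcon j, zero_mul]

lemma point_linear_x (I : Ideal (BiRing k n m)) (hPt : IsPointIdeal I)
    (hx0 : X (Sum.inl 0) ∉ I) {A : BiRing k n m} (hA : BihomOfDeg A (1, 0)) :
    ∃ c : k, A - c • X (Sum.inl 0) ∈ I := by
  obtain ⟨L, L', hL, hL', hind, hI⟩ := hPt
  have hLI : ∀ a, L a ∈ I := fun a =>
    hI ▸ Ideal.subset_span (Set.mem_union_left _ (Set.mem_range_self a))
  have hLind : LinearIndependent k L := by
    have := hind.comp Sum.inl Sum.inl_injective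
    rwa [Sum.elim_comp_inl] at this
  have hxsind : LinearIndependent k (xs k n m) :=
    (MvPolynomial.linearIndependent_X (Fin (n+1) ⊕ Fin (m+1)) k).comp
      Sum.inl Sum.inl_injective
  have hx0W : X (Sum.inl 0) ∉ Submodule.span k (Set.range L) := by
    intro hmem
    refine hx0 ?_
    have hle : Submodule.span k (Set.range L) ≤ (Submodule.restrictScalars k (I : Submodule (BiRing k n m) (BiRing k n m))) :=
      Submodule.span_le.mpr (by rintro _ ⟨a, rfl⟩; exact hLI a)
    exact hle hmem
  obtain ⟨c, hc⟩ := span_dim_arg (Submodule.span k (Set.range (xs k n m)))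
    (xs k n m) hxsind rfl L hLind (fun a => mem_span_xs (hL a))
    (X (Sum.inl 0)) (Submodule.subset_span ⟨0, rfl⟩) hx0W (mem_span_xs hA)
  refine ⟨c, ?_⟩
  have hle : Submodule.span k (Set.range L) ≤ Submodule.restrictScalars k (I : Submodule (BiRing k n m) (BiRing k n m)) :=
    Submodule.span_le.mpr (by rintro _ ⟨a, rfl⟩; exact hLI a)
  exact hle hc

lemma point_linear_y (I : Ideal (BiRing k n m)) (hPt : IsPointIdeal I)
    (hy0 : X (Sum.inr 0) ∉ I) {A : BiRing k n m} (hA : BihomOfDeg A (0, 1)) :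
    ∃ c : k, A - c • X (Sum.inr 0) ∈ I := by
  obtain ⟨L, L', hL, hL', hind, hI⟩ := hPt
  have hLI : ∀ b, L' b ∈ I := fun b =>
    hI ▸ Ideal.subset_span (Set.mem_union_right _ (Set.mem_range_self b))
  have hLind : LinearIndependent k L' := by
    have := hind.comp Sum.inr Sum.inr_injective
    rwa [Sum.elim_comp_inr] at this
  have hysind : LinearIndependent k (ys k n m) :=
    (MvPolynomial.linearIndependent_X (Fin (n+1) ⊕ Fin (m+1)) k).comp
      Sum.inr Sum.inr_injective
  have hy0W : X (Sum.inr 0) ∉ Submodule.span k (Set.range L') := by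
    intro hmem
    refine hy0 ?_
    have hle : Submodule.span k (Set.range L') ≤ Submodule.restrictScalars k (I : Submodule (BiRing k n m) (BiRing k n m)) :=
      Submodule.span_le.mpr (by rintro _ ⟨b, rfl⟩; exact hLI b)
    exact hle hmem
  obtain ⟨c, hc⟩ := span_dim_arg (Submodule.span k (Set.range (ys k n m)))
    (ys k n m) hysind rfl L' hLind (fun b => mem_span_ys (hL' b))
    (X (Sum.inr 0)) (Submodule.subset_span ⟨0, rfl⟩) hy0W (mem_span_ys hA)
  refine ⟨c, ?_⟩
  have hle : Submodule.span k (Set.range L') ≤ Submodule.restrictScalars k (I : Submodule (BiRing k n m) (BiRing k n m)) :=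
    Submodule.span_le.mpr (by rintro _ ⟨b, rfl⟩; exact hLI b)
  exact hle hc

lemma monomial_congruence (I : Ideal (BiRing k n m)) (hPt : IsPointIdeal I)
    (hx0 : X (Sum.inl 0) ∉ I) (hy0 : X (Sum.inr 0) ∉ I) :
    ∀ (N a b : ℕ) (A : BiRing k n m), a + b = N → BihomOfDeg A (a, b) →
      ∃ c : k, A - c • (X (Sum.inl 0) ^ a * X (Sum.inr 0) ^ b) ∈ I := by
  intro N
  induction N with
  | zero =>
    intro a b A hab hA
    obtain rfl : a = 0 := by omega
    obtain rfl : b = 0 := by omega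
    refine ⟨coeff 0 A, ?_⟩
    rw [pow_zero, pow_zero, one_mul, smul_eq_C_mul, mul_one, ← eq_C_of_deg00 hA,
      sub_self]
    exact Ideal.zero_mem I
  | succ N ih =>
    intro a b A hab hA
    classical
    have key : ∀ σ ∈ A.support, ∃ c : k,
        monomial σ (coeff σ A) - c • (X (Sum.inl 0) ^ a * X (Sum.inr 0) ^ b) ∈ I := by
      intro σ hσ
      have hw : Finsupp.weight (biWeight n m) σ = (a, b) :=
        hA (mem_support_iff.mp hσ)
      rcases Nat.eq_zero_or_pos a with ha | ha
      · -- y case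
        subst ha
        obtain ⟨b', rfl⟩ : ∃ b', b = b' + 1 := ⟨b - 1, by omega⟩
        have h2 : (Finsupp.weight (biWeight n m) σ).2 ≠ 0 := by
          rw [hw]; exact Nat.succ_ne_zero b'
        obtain ⟨jv, hjv⟩ := exists_inr_ne_zero h2
        set τ := σ - Finsupp.single (Sum.inr jv) 1 with hτ
        have hsplit : Finsupp.single (Sum.inr jv) 1 + τ = σ :=
          add_tsub_cancel_of_le
            (Finsupp.single_le_iff.mpr (Nat.one_le_iff_ne_zero.mpr hjv))
        have hwadd := congrArg (Finsupp.weight (biWeight n m)) hsplit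
        have hbw : biWeight n m (Sum.inr jv) = (0, 1) := rfl
        rw [map_add, weight_single_one, hbw, hw] at hwadd
        have hwτ : Finsupp.weight (biWeight n m) τ = (0, b') := by
          have h1 := congrArg Prod.fst hwadd
          have h2' := congrArg Prod.snd hwadd
          simp only [Prod.fst_add, Prod.snd_add] at h1 h2'
          exact Prod.ext (by omega) (by omega)
        have hmono : monomial σ (coeff σ A)
            = X (Sum.inr jv) * monomial τ (coeff σ A) := by
          rw [← hsplit, monomial_single_add, pow_one]
        obtain ⟨c1, hc1⟩ := ih 0 b' (monomial τ (coeff σ A)) (by omega)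
          (isWeightedHomogeneous_monomial _ _ _ hwτ)
        obtain ⟨c2, hc2⟩ := point_linear_y I hPt hy0
          (isWeightedHomogeneous_X k (biWeight n m) (Sum.inr jv))
        refine ⟨c2 * c1, ?_⟩
        have hkey : monomial σ (coeff σ A)
              - (c2 * c1) • (X (Sum.inl 0) ^ 0 * X (Sum.inr 0) ^ (b' + 1))
            = (X (Sum.inr jv) - c2 • X (Sum.inr 0)) * monomial τ (coeff σ A)
              + (C c2 * X (Sum.inr 0)) *
                (monomial τ (coeff σ A)
                  - c1 • (X (Sum.inl 0) ^ 0 * X (Sum.inr 0) ^ b')) := by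
          simp only [smul_eq_C_mul, map_mul, hmono, pow_zero, one_mul, pow_succ]
          ring
        rw [hkey]
        exact Ideal.add_mem _ (Ideal.mul_mem_right _ _ hc2)
          (Ideal.mul_mem_left _ _ hc1)
      · -- x case
        obtain ⟨a', rfl⟩ : ∃ a', a = a' + 1 := ⟨a - 1, by omega⟩
        have h1 : (Finsupp.weight (biWeight n m) σ).1 ≠ 0 := by
          rw [hw]; exact Nat.succ_ne_zero a'
        obtain ⟨iv, hiv⟩ := exists_inl_ne_zero h1
        set τ := σ - Finsupp.single (Sum.inl iv) 1 with hτ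
        have hsplit : Finsupp.single (Sum.inl iv) 1 + τ = σ :=
          add_tsub_cancel_of_le
            (Finsupp.single_le_iff.mpr (Nat.one_le_iff_ne_zero.mpr hiv))
        have hwadd := congrArg (Finsupp.weight (biWeight n m)) hsplit
        have hbw : biWeight n m (Sum.inl iv) = (1, 0) := rfl
        rw [map_add, weight_single_one, hbw, hw] at hwadd
        have hwτ : Finsupp.weight (biWeight n m) τ = (a', b) := by
          have h1' := congrArg Prod.fst hwadd
          have h2' := congrArg Prod.snd hwadd
          simp only [Prod.fst_add, Prod.snd_add] at h1' h2'
          exact Prod.ext (by omega) (by omega)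
        have hmono : monomial σ (coeff σ A)
            = X (Sum.inl iv) * monomial τ (coeff σ A) := by
          rw [← hsplit, monomial_single_add, pow_one]
        obtain ⟨c1, hc1⟩ := ih a' b (monomial τ (coeff σ A)) (by omega)
          (isWeightedHomogeneous_monomial _ _ _ hwτ)
        obtain ⟨c2, hc2⟩ := point_linear_x I hPt hx0
          (isWeightedHomogeneous_X k (biWeight n m) (Sum.inl iv))
        refine ⟨c2 * c1, ?_⟩
        have hkey : monomial σ (coeff σ A)
              - (c2 * c1) • (X (Sum.inl 0) ^ (a' + 1) * X (Sum.inr 0) ^ b)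
            = (X (Sum.inl iv) - c2 • X (Sum.inl 0)) * monomial τ (coeff σ A)
              + (C c2 * X (Sum.inl 0)) *
                (monomial τ (coeff σ A)
                  - c1 • (X (Sum.inl 0) ^ a' * X (Sum.inr 0) ^ b)) := by
          simp only [smul_eq_C_mul, map_mul, hmono, pow_succ]
          ring
        rw [hkey]
        exact Ideal.add_mem _ (Ideal.mul_mem_right _ _ hc2)
          (Ideal.mul_mem_left _ _ hc1)
    choose! c hc using key
    refine ⟨∑ σ ∈ A.support, c σ, ?_⟩
    have hsum : A - (∑ σ ∈ A.support, c σ) • (X (Sum.inl 0) ^ a * X (Sum.inr 0) ^ b)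
        = ∑ σ ∈ A.support,
            (monomial σ (coeff σ A) - c σ • (X (Sum.inl 0) ^ a * X (Sum.inr 0) ^ b)) := by
      rw [Finset.sum_sub_distrib, support_sum_monomial_coeff, ← Finset.sum_smul]
    rw [hsum]
    exact Submodule.sum_mem _ fun σ hσ => hc σ hσ


section Graded

attribute [local instance] MvPolynomial.weightedGradedAlgebra

lemma coe_decompose_eq (φ : BiRing k n m) (t : ℕ × ℕ) :
    ((DirectSum.decompose (weightedHomogeneousSubmodule k (biWeight n m)) φ t
      : BiRing k n m)) = weightedHomogeneousComponent (biWeight n m) t φ :=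
  MvPolynomial.decompose'_apply k (biWeight n m) φ t

lemma pointIdeal_isHomogeneous {I : Ideal (BiRing k n m)} (hPt : IsPointIdeal I) :
    I.IsHomogeneous (weightedHomogeneousSubmodule k (biWeight n m)) := by
  obtain ⟨L, L', hL, hL', -, rfl⟩ := hPt
  apply Ideal.homogeneous_span
  rintro x (⟨a, rfl⟩ | ⟨b, rfl⟩)
  · exact ⟨(1, 0), (MvPolynomial.mem_weightedHomogeneousSubmodule _ _ _ _).mpr (hL a)⟩
  · exact ⟨(0, 1), (MvPolynomial.mem_weightedHomogeneousSubmodule _ _ _ _).mpr (hL' b)⟩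

lemma isHomogeneous_pow {I : Ideal (BiRing k n m)}
    (h : I.IsHomogeneous (weightedHomogeneousSubmodule k (biWeight n m))) (e : ℕ) :
    (I ^ e).IsHomogeneous (weightedHomogeneousSubmodule k (biWeight n m)) := by
  induction e with
  | zero => rw [pow_zero, Ideal.one_eq_top]; exact Ideal.IsHomogeneous.top _
  | succ e ih => rw [pow_succ]; exact Ideal.IsHomogeneous.mul ih h

lemma fatIdeal_isHomogeneous {s : ℕ} (P : Fin s → Ideal (BiRing k n m))
    (mult : Fin s → ℕ) (hP : ∀ j, IsPointIdeal (P j)) :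
    (fatIdeal P mult).IsHomogeneous (weightedHomogeneousSubmodule k (biWeight n m)) :=
  Ideal.IsHomogeneous.iInf fun j =>
    isHomogeneous_pow (pointIdeal_isHomogeneous (hP j)) (mult j)

lemma component_mem_of_isHomogeneous {I : Ideal (BiRing k n m)}
    (h : I.IsHomogeneous (weightedHomogeneousSubmodule k (biWeight n m)))
    {f : BiRing k n m} (hf : f ∈ I) (t : ℕ × ℕ) :
    weightedHomogeneousComponent (biWeight n m) t f ∈ I := by
  have := h t hf
  rwa [coe_decompose_eq] at this

lemma component_mul_right {a F : BiRing k n m} {e t : ℕ × ℕ}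
    (hF : IsWeightedHomogeneous (biWeight n m) F e) (hle : e ≤ t) :
    weightedHomogeneousComponent (biWeight n m) t (a * F)
      = weightedHomogeneousComponent (biWeight n m) (t - e) a * F := by
  have hFm : F ∈ weightedHomogeneousSubmodule k (biWeight n m) e :=
    (MvPolynomial.mem_weightedHomogeneousSubmodule _ _ _ _).mpr hF
  have := DirectSum.coe_decompose_mul_of_right_mem_of_le
    (weightedHomogeneousSubmodule k (biWeight n m)) (a := a) hFm hle
  rwa [coe_decompose_eq, coe_decompose_eq] at this

lemma component_mul_right_of_not_le {a F : BiRing k n m} {e t : ℕ × ℕ}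
    (hF : IsWeightedHomogeneous (biWeight n m) F e) (hle : ¬ e ≤ t) :
    weightedHomogeneousComponent (biWeight n m) t (a * F) = 0 := by
  have hFm : F ∈ weightedHomogeneousSubmodule k (biWeight n m) e :=
    (MvPolynomial.mem_weightedHomogeneousSubmodule _ _ _ _).mpr hF
  have := DirectSum.coe_decompose_mul_of_right_mem_of_not_le
    (weightedHomogeneousSubmodule k (biWeight n m)) (a := a) hFm hle
  rwa [coe_decompose_eq] at this

end Graded

end SepAux

attribute [local instance] MvPolynomial.weightedGradedAlgebra

/-- Theorem 4.3(i): if `{F₁,…,F_p}` is a good set of minimal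
separators, then for every `t ∈ ℕ²` the classes of the elements
`x₀^{t₁-dⱼ₁} y₀^{t₂-dⱼ₂} Fⱼ` (over those `j` with `d j ⪯ t`) form a `k`-basis of
`(I_{Z'}/I_Z)_t`: they span (first conjunct) and are linearly independent
(second conjunct). -/
theorem stmt5 [IsAlgClosed k] [CharZero k] {s : ℕ}
    (P : Fin s → Ideal (BiRing k n m)) (mult : Fin s → ℕ)
    (hP : ∀ j, IsPointIdeal (P j)) (hinj : Function.Injective P)
    (hmult : ∀ j, 1 ≤ mult j) (i : Fin s)
    (IZ IZ' : Ideal (BiRing k n m))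
    (hIZ : IZ = fatIdeal P mult)
    (hIZ' : IZ' = fatIdeal P (Function.update mult i (mult i - 1)))
    (hx : ∀ g : BiRing k n m, X (Sum.inl 0) * g ∈ IZ → g ∈ IZ)
    (hy : ∀ g : BiRing k n m, X (Sum.inr 0) * g ∈ IZ → g ∈ IZ)
    (hx' : ∀ g : BiRing k n m, X (Sum.inl 0) * g ∈ IZ' → g ∈ IZ')
    (hy' : ∀ g : BiRing k n m, X (Sum.inr 0) * g ∈ IZ' → g ∈ IZ')
    {p : ℕ} (F : Fin p → BiRing k n m) (d : Fin p → ℕ × ℕ)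
    (hdeg : ∀ j, BihomOfDeg (F j) (d j))
    (hmin : IsMinSepSet IZ IZ' F)
    (hgood : IsGoodSepSet IZ F d) :
    ∀ t : ℕ × ℕ,
      (∀ H, H ∈ IZ' → BihomOfDeg H t →
        ∃ c : Fin p → k,
          H - (∑ j ∈ Finset.univ.filter (fun j => (d j).1 ≤ t.1 ∧ (d j).2 ≤ t.2),
            c j • (X (Sum.inl 0) ^ (t.1 - (d j).1) * X (Sum.inr 0) ^ (t.2 - (d j).2) * F j)) ∈ IZ) ∧
      (∀ c : Fin p → k,
        (∑ j ∈ Finset.univ.filter (fun j => (d j).1 ≤ t.1 ∧ (d j).2 ≤ t.2),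
            c j • (X (Sum.inl 0) ^ (t.1 - (d j).1) * X (Sum.inr 0) ^ (t.2 - (d j).2) * F j)) ∈ IZ →
        ∀ j : Fin p, (d j).1 ≤ t.1 → (d j).2 ≤ t.2 → c j = 0) := by
  classical
  intro t
  refine ⟨?_, hgood t⟩
  intro H hH hHt
  rcases Nat.eq_zero_or_pos p with hp | hp
  · -- p = 0 : IZ = IZ'
    subst hp
    have hFr : Set.range F = ∅ := Set.range_eq_empty F
    have hIZeq : IZ = IZ' := by
      have := hmin.2.1
      rwa [hFr, Ideal.span_empty, sup_bot_eq] at this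
    refine ⟨fun _ => 0, ?_⟩
    have hempty : (Finset.univ : Finset (Fin 0)) = ∅ := rfl
    rw [hempty, Finset.filter_empty, Finset.sum_empty, sub_zero, hIZeq]
    exact hH
  · -- p ≥ 1
    set j0 : Fin p := ⟨0, hp⟩
    have hPiIZ' : P i * IZ' ≤ IZ := by
      rw [hIZ, hIZ', fatIdeal, fatIdeal]
      refine le_iInf fun l => ?_
      rcases eq_or_ne l i with rfl | hne
      · have h1 : (⨅ j, P j ^ Function.update mult l (mult l - 1) j)
            ≤ P l ^ (mult l - 1) := by
          have := iInf_le (fun j => P j ^ Function.update mult l (mult l - 1) j) l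
          rwa [Function.update_self] at this
        calc P l * ⨅ j, P j ^ Function.update mult l (mult l - 1) j
            ≤ P l * P l ^ (mult l - 1) := Ideal.mul_mono le_rfl h1
          _ = P l ^ (mult l - 1 + 1) := (pow_succ' (P l) (mult l - 1)).symm
          _ = P l ^ mult l := by rw [Nat.sub_add_cancel (hmult l)]
      · have h1 : (⨅ j, P j ^ Function.update mult i (mult i - 1) j)
            ≤ P l ^ mult l := by
          have := iInf_le (fun j => P j ^ Function.update mult i (mult i - 1) j) l
          rwa [Function.update_of_ne hne] at this
        exact le_trans Ideal.mul_le_right h1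
    have hFIZ' : ∀ j, F j ∈ IZ' := fun j => (hmin.1 j).2.1
    have hxPi : X (Sum.inl 0) ∉ P i := by
      intro hmem
      exact (hmin.1 j0).2.2 (hx _ (hPiIZ' (Ideal.mul_mem_mul hmem (hFIZ' j0))))
    have hyPi : X (Sum.inr 0) ∉ P i := by
      intro hmem
      exact (hmin.1 j0).2.2 (hy _ (hPiIZ' (Ideal.mul_mem_mul hmem (hFIZ' j0))))
    have hIZhom : IZ.IsHomogeneous (weightedHomogeneousSubmodule k (biWeight n m)) := by
      rw [hIZ]; exact SepAux.fatIdeal_isHomogeneous P mult hP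
    have hHsup : H ∈ IZ ⊔ Ideal.span (Set.range F) := hmin.2.1 ▸ hH
    obtain ⟨g, hg, h2, hh2, hghH⟩ := Submodule.mem_sup.mp hHsup
    obtain ⟨a, ha⟩ := Ideal.mem_span_range_iff_exists_fun.mp hh2
    set comp : BiRing k n m →ₗ[k] BiRing k n m := weightedHomogeneousComponent (biWeight n m) t with hcompdef
    have hHcomp : comp H = H :=
      MvPolynomial.IsWeightedHomogeneous.weightedHomogeneousComponent_same hHt
    have hgcomp : comp g ∈ IZ := SepAux.component_mem_of_isHomogeneous hIZhom hg t
    set A : Fin p → BiRing k n m :=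
      fun j => weightedHomogeneousComponent (biWeight n m) (t - d j) (a j) with hA
    have hterm : ∀ j : Fin p,
        comp (a j * F j) = if (d j).1 ≤ t.1 ∧ (d j).2 ≤ t.2 then A j * F j else 0 := by
      intro j
      by_cases hle : d j ≤ t
      · rw [if_pos (Prod.le_def.mp hle), hcompdef,
          SepAux.component_mul_right (hdeg j) hle]
      · rw [if_neg (fun h => hle (Prod.le_def.mpr h)), hcompdef,
          SepAux.component_mul_right_of_not_le (hdeg j) hle]
    have hcong : ∀ j : Fin p, ∃ c : k,
        A j - c • (X (Sum.inl 0) ^ (t.1 - (d j).1) * X (Sum.inr 0) ^ (t.2 - (d j).2))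
          ∈ P i := by
      intro j
      have hAj : BihomOfDeg (A j) (t.1 - (d j).1, t.2 - (d j).2) := by
        have := MvPolynomial.weightedHomogeneousComponent_isWeightedHomogeneous
          (w := biWeight n m) (t - d j) (a j)
        exact this
      exact SepAux.monomial_congruence (P i) (hP i) hxPi hyPi
        ((t.1 - (d j).1) + (t.2 - (d j).2)) (t.1 - (d j).1) (t.2 - (d j).2)
        (A j) rfl hAj
    choose c hc using hcong
    refine ⟨c, ?_⟩
    set Q : Finset (Fin p) :=
      Finset.univ.filter (fun j => (d j).1 ≤ t.1 ∧ (d j).2 ≤ t.2) with hQ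
    set M : Fin p → BiRing k n m :=
      fun j => X (Sum.inl 0) ^ (t.1 - (d j).1) * X (Sum.inr 0) ^ (t.2 - (d j).2) with hM
    have hHdec : H = comp g + ∑ j ∈ Q, A j * F j := by
      conv_lhs => rw [← hHcomp, ← hghH, ← ha]
      rw [map_add, map_sum]
      congr 1
      rw [Finset.sum_congr rfl (fun j _ => hterm j), Finset.sum_ite, Finset.sum_const_zero,
        add_zero, hQ]
    have hgoal : H - ∑ j ∈ Q, c j • (M j * F j)
        = comp g + ∑ j ∈ Q, ((A j - c j • M j) * F j) := by
      rw [hHdec, add_sub_assoc, ← Finset.sum_sub_distrib]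
      congr 1
      refine Finset.sum_congr rfl fun j _ => ?_
      rw [sub_mul, smul_mul_assoc]
    rw [show (∑ j ∈ Finset.univ.filter (fun j => (d j).1 ≤ t.1 ∧ (d j).2 ≤ t.2),
            c j • (X (Sum.inl 0) ^ (t.1 - (d j).1) * X (Sum.inr 0) ^ (t.2 - (d j).2) * F j))
        = ∑ j ∈ Q, c j • (M j * F j) from rfl]
    rw [hgoal]
    refine Ideal.add_mem _ hgcomp (Submodule.sum_mem _ fun j _ => ?_)
    exact hPiIZ' (Ideal.mul_mem_mul (hc j) (hFIZ' j))
end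
end

section
/- Let Z = m_1P_1 + ⋯ + m_sP_s be a fat point scheme in ℙⁿ×ℙᵐ and suppose Z is arithmetically Cohen–Macaulay. Then for every fixed point P_i, every set of minimal separators {F_1,…,F_p} of P_i of multiplicity m_i is a good set of minimal separators. -/
/-!
Formalization of statements from "Separators of fat points in ℙⁿ×ℙᵐ"
(Guardo–Van Tuyl).  The bigraded coordinate ring `R = k[x₀,…,xₙ,y₀,…,y_m]` of
`ℙⁿ×ℙᵐ` is modelled as `MvPolynomial (Fin (n+1) ⊕ Fin (m+1)) k`, where the
variable `X (Sum.inl i)` is `xᵢ` (degree `(1,0)`) and `X (Sum.inr j)` is `yⱼ`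
(degree `(0,1)`); bihomogeneity is weighted homogeneity for the weight `biWeight`.
-/

open MvPolynomial

noncomputable section

variable {k : Type} [Field k] {n m : ℕ}

namespace Stmt9Aux

instance : GradedRing (weightedHomogeneousSubmodule k (biWeight n m)) :=
  weightedGradedAlgebra k (biWeight n m)

lemma mem_of_isHomogeneous {I : Ideal (BiRing k n m)}
    (hI : I.IsHomogeneous (weightedHomogeneousSubmodule k (biWeight n m)))
    {f : BiRing k n m} (hf : f ∈ I) (t : ℕ × ℕ) :
    weightedHomogeneousComponent (biWeight n m) t f ∈ I := by
  have := hI t hf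
  rwa [← MvPolynomial.decompose'_apply k (biWeight n m) f t]

lemma smul_mem_ideal {I : Ideal (BiRing k n m)} (c : k) {f : BiRing k n m}
    (hf : f ∈ I) : c • f ∈ I := by
  rw [MvPolynomial.smul_eq_C_mul]; exact Ideal.mul_mem_left _ _ hf

lemma div_pow {I : Ideal (BiRing k n m)} {z : BiRing k n m}
    (hz : ∀ g, z * g ∈ I → g ∈ I) :
    ∀ N g, z ^ N * g ∈ I → g ∈ I := by
  intro N
  induction N with
  | zero => intro g hg; simpa using hg
  | succ N ih =>
    intro g hg
    apply ih
    apply hz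
    rw [← mul_assoc, mul_comm z (z ^ N)]
    simpa [pow_succ, mul_assoc] using hg

/-- The predicate: every monomial of `f` has `x₀`-degree plus `y₀`-degree at least `N`. -/
def LowDeg (N : ℕ) (f : BiRing k n m) : Prop :=
  ∀ μ ∈ f.support, N ≤ μ (Sum.inl 0) + μ (Sum.inr 0)

lemma LowDeg.add {N : ℕ} {f g : BiRing k n m} (hf : LowDeg N f) (hg : LowDeg N g) :
    LowDeg N (f + g) := by
  intro μ hμ
  rcases Finset.mem_union.mp (MvPolynomial.support_add hμ) with h | h
  · exact hf μ h
  · exact hg μ h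

lemma LowDeg.mul {a b : ℕ} {f g : BiRing k n m} (hf : LowDeg a f) (hg : LowDeg b g) :
    LowDeg (a + b) (f * g) := by
  intro μ hμ
  have := MvPolynomial.support_mul f g hμ
  rw [Finset.mem_add] at this
  obtain ⟨ν, hν, ρ, hρ, rfl⟩ := this
  have h1 := hf ν hν
  have h2 := hg ρ hρ
  simp only [Finsupp.add_apply]
  omega

lemma lowDeg_zero_all (f : BiRing k n m) : LowDeg 0 f := fun _ _ => Nat.zero_le _

/-- `LowDeg N` as an ideal. -/
def lowDegIdeal (N : ℕ) : Ideal (BiRing k n m) where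
  carrier := {f | LowDeg N f}
  zero_mem' := by intro μ hμ; simp at hμ
  add_mem' := LowDeg.add
  smul_mem' := by
    intro c f hf
    have := LowDeg.mul (lowDeg_zero_all c) hf
    simpa using this

lemma span_xy_pow_le (N : ℕ) :
    (Ideal.span {(X (Sum.inl 0) : BiRing k n m), X (Sum.inr 0)}) ^ N ≤ lowDegIdeal N := by
  induction N with
  | zero =>
    intro f _
    exact lowDeg_zero_all f
  | succ N ih =>
    rw [pow_succ]
    refine Ideal.mul_le.mpr fun r hr s hs => ?_
    have h1 : LowDeg N r := ih hr
    have h2 : LowDeg 1 s := by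
      have : Ideal.span {(X (Sum.inl 0) : BiRing k n m), X (Sum.inr 0)} ≤ lowDegIdeal 1 := by
        rw [Ideal.span_le]
        rintro z (rfl | rfl) <;>
        · intro μ hμ
          rw [MvPolynomial.support_X, Finset.mem_singleton] at hμ
          subst hμ
          simp [Finsupp.single_apply]
      exact this hs
    exact LowDeg.mul h1 h2

lemma fst_weight (μ : (Fin (n+1) ⊕ Fin (m+1)) →₀ ℕ) :
    (Finsupp.weight (biWeight n m) μ).1 = Finsupp.weight (fun v => (biWeight n m v).1) μ := by
  simp [Finsupp.weight_apply, Finsupp.sum, Prod.fst_sum]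

lemma snd_weight (μ : (Fin (n+1) ⊕ Fin (m+1)) →₀ ℕ) :
    (Finsupp.weight (biWeight n m) μ).2 = Finsupp.weight (fun v => (biWeight n m v).2) μ := by
  simp [Finsupp.weight_apply, Finsupp.sum, Prod.snd_sum]

lemma comp_eq_zero_of_lowDeg {N : ℕ} {f : BiRing k n m} (hf : LowDeg N f)
    {t : ℕ × ℕ} (ht : t.1 + t.2 < N) :
    weightedHomogeneousComponent (biWeight n m) t f = 0 := by
  classical
  ext μ
  rw [coeff_weightedHomogeneousComponent, coeff_zero]
  split_ifs with hw
  · by_contra hne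
    have hsup : μ ∈ f.support := by rwa [MvPolynomial.mem_support_iff]
    have hN := hf μ hsup
    have h1 : μ (Sum.inl 0) ≤ (Finsupp.weight (biWeight n m) μ).1 := by
      rw [fst_weight]
      by_cases h0 : μ (Sum.inl 0) = 0
      · omega
      · exact Finsupp.le_weight _ (by simp [biWeight]) μ
    have h2 : μ (Sum.inr 0) ≤ (Finsupp.weight (biWeight n m) μ).2 := by
      rw [snd_weight]
      by_cases h0 : μ (Sum.inr 0) = 0
      · omega
      · exact Finsupp.le_weight _ (by simp [biWeight]) μ
    rw [hw] at h1 h2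
    omega
  · rfl

lemma nakayama {I' J : Ideal (BiRing k n m)}
    (hJhom : J.IsHomogeneous (weightedHomogeneousSubmodule k (biWeight n m)))
    (h : I' ≤ J ⊔ Ideal.span {(X (Sum.inl 0) : BiRing k n m), X (Sum.inr 0)} * I') :
    I' ≤ J := by
  set NN : Ideal (BiRing k n m) := Ideal.span {(X (Sum.inl 0) : BiRing k n m), X (Sum.inr 0)}
  have step : ∀ N : ℕ, I' ≤ J ⊔ NN ^ N * I' := by
    intro N
    induction N with
    | zero => simpa [Ideal.one_eq_top] using le_sup_right
    | succ N ih =>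
      refine le_trans ih (sup_le le_sup_left ?_)
      calc NN ^ N * I' ≤ NN ^ N * (J ⊔ NN * I') := Ideal.mul_mono_right h
        _ = NN ^ N * J ⊔ NN ^ N * (NN * I') := Ideal.mul_sup _ _ _
        _ ≤ J ⊔ NN ^ (N + 1) * I' := by
            apply sup_le_sup
            · exact Ideal.mul_le_right
            · rw [pow_succ, mul_assoc]
  intro f hf
  have hcomp : ∀ t : ℕ × ℕ, weightedHomogeneousComponent (biWeight n m) t f ∈ J := by
    intro t
    obtain ⟨a, ha, b, hb, hab⟩ := Submodule.mem_sup.mp (step (t.1 + t.2 + 1) hf)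
    have hb' : LowDeg (t.1 + t.2 + 1) b :=
      span_xy_pow_le (t.1 + t.2 + 1) (Ideal.mul_le_left hb)
    have hbz : weightedHomogeneousComponent (biWeight n m) t b = 0 :=
      comp_eq_zero_of_lowDeg hb' (Nat.lt_succ_self _)
    have : weightedHomogeneousComponent (biWeight n m) t f
        = weightedHomogeneousComponent (biWeight n m) t a := by
      rw [← hab, map_add, hbz, add_zero]
    rw [this]
    exact mem_of_isHomogeneous hJhom ha t
  have hsum := sum_weightedHomogeneousComponent (biWeight n m) f
  rw [← hsum, finsum_eq_sum _ (weightedHomogeneousComponent_finsupp f)]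
  exact Ideal.sum_mem _ fun t _ => hcomp t

lemma pow_isHomogeneous {I : Ideal (BiRing k n m)}
    (hI : I.IsHomogeneous (weightedHomogeneousSubmodule k (biWeight n m))) (e : ℕ) :
    (I ^ e).IsHomogeneous (weightedHomogeneousSubmodule k (biWeight n m)) := by
  induction e with
  | zero =>
    rw [pow_zero, Ideal.one_eq_top]
    exact Ideal.IsHomogeneous.top _
  | succ e ih => rw [pow_succ]; exact Ideal.IsHomogeneous.mul ih hI

end Stmt9Aux

set_option maxHeartbeats 1000000 in
/-- Theorem 5.1, the first main theorem: if the fat point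
scheme `Z ⊆ ℙⁿ×ℙᵐ` is ACM (with coordinates chosen so that `x₀, y₀` is a regular
sequence on `R/I_Z` and `x₀, y₀` are nonzero-divisors on `R/I_{Z'}`), then every
set of minimal separators of the point `Pᵢ` of multiplicity `mᵢ` is a good set of
minimal separators. -/
theorem stmt9 [IsAlgClosed k] [CharZero k] {s : ℕ}
    (P : Fin s → Ideal (BiRing k n m)) (mult : Fin s → ℕ)
    (hP : ∀ j, IsPointIdeal (P j)) (hinj : Function.Injective P)
    (hmult : ∀ j, 1 ≤ mult j) (i : Fin s)
    (IZ IZ' : Ideal (BiRing k n m))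
    (hIZ : IZ = fatIdeal P mult)
    (hIZ' : IZ' = fatIdeal P (Function.update mult i (mult i - 1)))
    (hx : ∀ g : BiRing k n m, X (Sum.inl 0) * g ∈ IZ → g ∈ IZ)
    (hy : ∀ g : BiRing k n m, X (Sum.inr 0) * g ∈ IZ → g ∈ IZ)
    (hx' : ∀ g : BiRing k n m, X (Sum.inl 0) * g ∈ IZ' → g ∈ IZ')
    (hy' : ∀ g : BiRing k n m, X (Sum.inr 0) * g ∈ IZ' → g ∈ IZ')
    (hxy : ∀ g : BiRing k n m,
      X (Sum.inr 0) * g ∈ IZ ⊔ Ideal.span {X (Sum.inl 0)} →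
        g ∈ IZ ⊔ Ideal.span {X (Sum.inl 0)})
    (hACM : IsACM IZ)
    {p : ℕ} (F : Fin p → BiRing k n m) (d : Fin p → ℕ × ℕ)
    (hdeg : ∀ j, BihomOfDeg (F j) (d j))
    (hmin : IsMinSepSet IZ IZ' F) :
    IsGoodSepSet IZ F d := by
  classical
  -- dispose of the trivial case `p = 0`
  rcases Nat.eq_zero_or_pos p with hp0 | hp0
  · intro t c _ j _ _
    exact absurd j.isLt (by omega)
  obtain ⟨p', rfl⟩ : ∃ p', p = p' + 1 := ⟨p - 1, by omega⟩
  -- homogeneity of `IZ`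
  have hIZhom : IZ.IsHomogeneous (weightedHomogeneousSubmodule k (biWeight n m)) := by
    rw [hIZ]
    apply Ideal.IsHomogeneous.iInf
    intro j
    apply Stmt9Aux.pow_isHomogeneous
    obtain ⟨L, L', hL, hL', -, hEq⟩ := hP j
    rw [hEq]
    apply Ideal.homogeneous_span
    rintro z (⟨a, rfl⟩ | ⟨b, rfl⟩)
    · exact ⟨(1, 0), (mem_weightedHomogeneousSubmodule _ _ _ _).mpr (hL a)⟩
    · exact ⟨(0, 1), (mem_weightedHomogeneousSubmodule _ _ _ _).mpr (hL' b)⟩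
  obtain ⟨hsep, hgen, hminimal⟩ := hmin
  have hFZ' : ∀ j', F j' ∈ IZ' := fun j' => (hsep j').2.1
  have hIZle : IZ ≤ IZ' := hgen ▸ le_sup_left
  intro t c hsum j hj1 hj2
  by_contra hc
  set x : BiRing k n m := X (Sum.inl 0) with hxdef
  set y : BiRing k n m := X (Sum.inr 0) with hydef
  set a : Fin (p' + 1) → ℕ := fun j' => t.1 - (d j').1 with hadef
  set b : Fin (p' + 1) → ℕ := fun j' => t.2 - (d j').2 with hbdef
  set S : Finset (Fin (p' + 1)) :=
    Finset.univ.filter (fun j' => (d j').1 ≤ t.1 ∧ (d j').2 ≤ t.2) with hSdef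
  set T0 : Finset (Fin (p' + 1)) := S.filter (fun j' => c j' ≠ 0) with hT0def
  have hjT0 : j ∈ T0 := by
    simp only [hT0def, hSdef, Finset.mem_filter, Finset.mem_univ, true_and]
    exact ⟨⟨hj1, hj2⟩, hc⟩
  have hT0ne : T0.Nonempty := ⟨j, hjT0⟩
  have hT0S : ∀ j', j' ∈ T0 → j' ∈ S := fun j' hj' => (Finset.mem_filter.mp hj').1
  -- restrict the sum to `T0`
  have hsum0 : (∑ j' ∈ T0, c j' • (x ^ a j' * y ^ b j' * F j')) ∈ IZ := by
    have h2 : ∑ j' ∈ T0, c j' • (x ^ a j' * y ^ b j' * F j')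
        = ∑ j' ∈ S, c j' • (x ^ a j' * y ^ b j' * F j') :=
      Finset.sum_filter_of_ne (fun j' _ hne hcz => hne (by rw [hcz, zero_smul]))
    rw [h2]
    exact hsum
  -- divide by the largest common power of `x`
  set α : ℕ := T0.inf' hT0ne a with hαdef
  have hαle : ∀ j' ∈ T0, α ≤ a j' := fun j' hj' => Finset.inf'_le a hj'
  have hfactor1 : (∑ j' ∈ T0, c j' • (x ^ a j' * y ^ b j' * F j'))
      = x ^ α * (∑ j' ∈ T0, c j' • (x ^ (a j' - α) * y ^ b j' * F j')) := by
    rw [Finset.mul_sum]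
    refine Finset.sum_congr rfl fun j' hj' => ?_
    rw [mul_smul_comm]
    congr 1
    have hpow : x ^ a j' = x ^ α * x ^ (a j' - α) := by
      rw [← pow_add, Nat.add_sub_cancel' (hαle j' hj')]
    rw [hpow]; ring
  have hmem1 : x ^ α * (∑ j' ∈ T0, c j' • (x ^ (a j' - α) * y ^ b j' * F j')) ∈ IZ := by
    rw [← hfactor1]; exact hsum0
  have hSig1 : (∑ j' ∈ T0, c j' • (x ^ (a j' - α) * y ^ b j' * F j')) ∈ IZ :=
    Stmt9Aux.div_pow hx α _ hmem1
  -- split off the part where the power of `x` is still positive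
  set T1 : Finset (Fin (p' + 1)) := T0.filter (fun j' => a j' = α) with hT1def
  have hT1ne : T1.Nonempty := by
    obtain ⟨j', hj', hjeq⟩ := Finset.exists_mem_eq_inf' hT0ne a
    exact ⟨j', Finset.mem_filter.mpr ⟨hj', hjeq.symm⟩⟩
  have hT1T0 : ∀ j', j' ∈ T1 → j' ∈ T0 := fun j' hj' => (Finset.mem_filter.mp hj').1
  have hsplit1 : (∑ j' ∈ T0, c j' • (x ^ (a j' - α) * y ^ b j' * F j'))
      = (∑ j' ∈ T1, c j' • (x ^ (a j' - α) * y ^ b j' * F j'))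
        + ∑ j' ∈ T0.filter (fun j' => ¬ a j' = α),
            c j' • (x ^ (a j' - α) * y ^ b j' * F j') :=
    (Finset.sum_filter_add_sum_filter_not T0 _ _).symm
  have hrest1 : (∑ j' ∈ T0.filter (fun j' => ¬ a j' = α),
      c j' • (x ^ (a j' - α) * y ^ b j' * F j')) ∈ Ideal.span {x} * IZ' := by
    refine Ideal.sum_mem _ fun j' hj' => ?_
    obtain ⟨hjT0', hne⟩ := Finset.mem_filter.mp hj'
    have h1 : 1 ≤ a j' - α := by have := hαle j' hjT0'; omega
    have heq : c j' • (x ^ (a j' - α) * y ^ b j' * F j')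
        = x * (c j' • (x ^ (a j' - α - 1) * y ^ b j' * F j')) := by
      rw [mul_smul_comm]
      congr 1
      have hpow : x ^ (a j' - α) = x * x ^ (a j' - α - 1) := by
        conv_lhs => rw [show a j' - α = (a j' - α - 1) + 1 by omega]
        rw [pow_succ]; ring
      rw [hpow]; ring
    rw [heq]
    exact Ideal.mul_mem_mul (Ideal.subset_span (Set.mem_singleton x))
      (Stmt9Aux.smul_mem_ideal _ (Ideal.mul_mem_left _ _ (hFZ' j')))
  have hSig2 : (∑ j' ∈ T1, c j' • (x ^ (a j' - α) * y ^ b j' * F j'))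
      ∈ IZ ⊔ Ideal.span {x} * IZ' := by
    have : (∑ j' ∈ T1, c j' • (x ^ (a j' - α) * y ^ b j' * F j'))
        = (∑ j' ∈ T0, c j' • (x ^ (a j' - α) * y ^ b j' * F j'))
          - ∑ j' ∈ T0.filter (fun j' => ¬ a j' = α),
              c j' • (x ^ (a j' - α) * y ^ b j' * F j') := by
      rw [hsplit1]; ring
    rw [this]
    exact Submodule.sub_mem _ (Submodule.mem_sup_left hSig1)
      (Submodule.mem_sup_right hrest1)
  -- divide by the largest common power of `y`
  set β : ℕ := T1.inf' hT1ne b with hβdef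
  have hβle : ∀ j' ∈ T1, β ≤ b j' := fun j' hj' => Finset.inf'_le b hj'
  have hfactor2 : (∑ j' ∈ T1, c j' • (x ^ (a j' - α) * y ^ b j' * F j'))
      = y ^ β * (∑ j' ∈ T1, c j' • (x ^ (a j' - α) * y ^ (b j' - β) * F j')) := by
    rw [Finset.mul_sum]
    refine Finset.sum_congr rfl fun j' hj' => ?_
    rw [mul_smul_comm]
    congr 1
    have hpow : y ^ b j' = y ^ β * y ^ (b j' - β) := by
      rw [← pow_add, Nat.add_sub_cancel' (hβle j' hj')]
    rw [hpow]; ring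
  have hmem2 : y ^ β * (∑ j' ∈ T1, c j' • (x ^ (a j' - α) * y ^ (b j' - β) * F j'))
      ∈ IZ ⊔ Ideal.span {x} := by
    rw [← hfactor2]
    exact (sup_le_sup_left (Ideal.mul_le_left (I := Ideal.span {x}) (J := IZ')) IZ) hSig2
  have hSig3x : (∑ j' ∈ T1, c j' • (x ^ (a j' - α) * y ^ (b j' - β) * F j'))
      ∈ IZ ⊔ Ideal.span {x} :=
    Stmt9Aux.div_pow hxy β _ hmem2
  have hSig3IZ : (∑ j' ∈ T1, c j' • (x ^ (a j' - α) * y ^ (b j' - β) * F j')) ∈ IZ' :=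
    Ideal.sum_mem _ fun j' _ =>
      Stmt9Aux.smul_mem_ideal _ (Ideal.mul_mem_left _ _ (hFZ' j'))
  -- improve the membership to `IZ ⊔ (x)·IZ'`
  have hSig3 : (∑ j' ∈ T1, c j' • (x ^ (a j' - α) * y ^ (b j' - β) * F j'))
      ∈ IZ ⊔ Ideal.span {x} * IZ' := by
    obtain ⟨g0, hg0, r, hr, heq⟩ := Submodule.mem_sup.mp hSig3x
    rw [Ideal.mem_span_singleton'] at hr
    obtain ⟨rr, rfl⟩ := hr
    have hxr : x * rr ∈ IZ' := by
      have : x * rr = (∑ j' ∈ T1, c j' • (x ^ (a j' - α) * y ^ (b j' - β) * F j')) - g0 := by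
        rw [← heq]; ring
      rw [this]
      exact Submodule.sub_mem _ hSig3IZ (hIZle hg0)
    have hrr : rr ∈ IZ' := hx' rr hxr
    rw [← heq]
    refine Submodule.add_mem _ (Submodule.mem_sup_left hg0) (Submodule.mem_sup_right ?_)
    rw [mul_comm rr x]
    exact Ideal.mul_mem_mul (Ideal.subset_span (Set.mem_singleton x)) hrr
  -- split off the part where the power of `y` is still positive
  set T2 : Finset (Fin (p' + 1)) := T1.filter (fun j' => b j' = β) with hT2def
  set NI : Ideal (BiRing k n m) :=
    IZ ⊔ Ideal.span {x} * IZ' ⊔ Ideal.span {y} * IZ' with hNIdef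
  have hrest2 : (∑ j' ∈ T1.filter (fun j' => ¬ b j' = β),
      c j' • (x ^ (a j' - α) * y ^ (b j' - β) * F j')) ∈ Ideal.span {y} * IZ' := by
    refine Ideal.sum_mem _ fun j' hj' => ?_
    obtain ⟨hjT1', hne⟩ := Finset.mem_filter.mp hj'
    have h1 : 1 ≤ b j' - β := by have := hβle j' hjT1'; omega
    have heq : c j' • (x ^ (a j' - α) * y ^ (b j' - β) * F j')
        = y * (c j' • (x ^ (a j' - α) * y ^ (b j' - β - 1) * F j')) := by
      rw [mul_smul_comm]
      congr 1
      have hpow : y ^ (b j' - β) = y * y ^ (b j' - β - 1) := by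
        conv_lhs => rw [show b j' - β = (b j' - β - 1) + 1 by omega]
        rw [pow_succ]; ring
      rw [hpow]; ring
    rw [heq]
    exact Ideal.mul_mem_mul (Ideal.subset_span (Set.mem_singleton y))
      (Stmt9Aux.smul_mem_ideal _ (Ideal.mul_mem_left _ _ (hFZ' j')))
  have hQmem : (∑ j' ∈ T2, c j' • (x ^ (a j' - α) * y ^ (b j' - β) * F j')) ∈ NI := by
    have hsplit2 : (∑ j' ∈ T2, c j' • (x ^ (a j' - α) * y ^ (b j' - β) * F j'))
        = (∑ j' ∈ T1, c j' • (x ^ (a j' - α) * y ^ (b j' - β) * F j'))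
          - ∑ j' ∈ T1.filter (fun j' => ¬ b j' = β),
              c j' • (x ^ (a j' - α) * y ^ (b j' - β) * F j') := by
      rw [← Finset.sum_filter_add_sum_filter_not T1 (fun j' => b j' = β)]
      ring
    rw [hsplit2]
    refine Submodule.sub_mem _ (Submodule.mem_sup_left hSig3) (Submodule.mem_sup_right hrest2)
  -- on `T2` the powers of `x` and `y` are trivial
  have hQ : (∑ j' ∈ T2, c j' • F j') ∈ NI := by
    have : (∑ j' ∈ T2, c j' • F j')
        = ∑ j' ∈ T2, c j' • (x ^ (a j' - α) * y ^ (b j' - β) * F j') := by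
      refine Finset.sum_congr rfl fun j' hj' => ?_
      obtain ⟨hjT1', hb'⟩ := Finset.mem_filter.mp hj'
      obtain ⟨-, ha'⟩ := Finset.mem_filter.mp hjT1'
      rw [ha', hb', Nat.sub_self, Nat.sub_self, pow_zero, pow_zero, one_mul, one_mul]
    rw [this]
    exact hQmem
  -- pick a member of `T2`
  obtain ⟨j0, hj0T1, hj0β⟩ := Finset.exists_mem_eq_inf' hT1ne b
  have hj0T2 : j0 ∈ T2 := Finset.mem_filter.mpr ⟨hj0T1, hj0β.symm⟩
  have hj0c : c j0 ≠ 0 := (Finset.mem_filter.mp (hT1T0 j0 hj0T1)).2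
  -- the ideal generated by the other separators
  set Jset : Set (BiRing k n m) := F '' {j' | j' ≠ j0} with hJsetdef
  set J : Ideal (BiRing k n m) := IZ ⊔ Ideal.span Jset with hJdef
  have hFj0 : F j0 ∈ NI ⊔ Ideal.span Jset := by
    have h2 : (∑ j' ∈ T2.erase j0, c j' • F j') ∈ Ideal.span Jset :=
      Ideal.sum_mem _ fun j' hj' =>
        Stmt9Aux.smul_mem_ideal _
          (Ideal.subset_span ⟨j', Finset.ne_of_mem_erase hj', rfl⟩)
    have h1 : c j0 • F j0
        = (∑ j' ∈ T2, c j' • F j') - ∑ j' ∈ T2.erase j0, c j' • F j' := by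
      rw [← Finset.add_sum_erase _ _ hj0T2]; ring
    have h3 : c j0 • F j0 ∈ NI ⊔ Ideal.span Jset := by
      rw [h1]
      exact Submodule.sub_mem _ (Submodule.mem_sup_left hQ) (Submodule.mem_sup_right h2)
    have h4 := Stmt9Aux.smul_mem_ideal (c j0)⁻¹ h3
    rwa [smul_smul, inv_mul_cancel₀ hj0c, one_smul] at h4
  -- the Nakayama step
  have hJhom : J.IsHomogeneous (weightedHomogeneousSubmodule k (biWeight n m)) := by
    refine Ideal.IsHomogeneous.sup hIZhom (Ideal.homogeneous_span _ _ ?_)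
    rintro z ⟨j', -, rfl⟩
    exact ⟨d j', (mem_weightedHomogeneousSubmodule _ _ _ _).mpr (hdeg j')⟩
  have hspanxle : Ideal.span {x} * IZ' ≤ Ideal.span {x, y} * IZ' :=
    Ideal.mul_mono_left (Ideal.span_mono (by simp))
  have hspanyle : Ideal.span {y} * IZ' ≤ Ideal.span {x, y} * IZ' :=
    Ideal.mul_mono_left (Ideal.span_mono (by simp))
  have hNIle : NI ≤ J ⊔ Ideal.span {x, y} * IZ' := by
    refine sup_le (sup_le ?_ ?_) ?_
    · exact le_trans le_sup_left le_sup_left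
    · exact le_trans hspanxle le_sup_right
    · exact le_trans hspanyle le_sup_right
  have hIZ'le : IZ' ≤ J ⊔ Ideal.span {x, y} * IZ' := by
    conv_lhs => rw [← hgen]
    refine sup_le (le_trans le_sup_left le_sup_left) (Ideal.span_le.mpr ?_)
    rintro z ⟨j', rfl⟩
    by_cases hjj : j' = j0
    · subst hjj
      have hle : NI ⊔ Ideal.span Jset ≤ J ⊔ Ideal.span {x, y} * IZ' :=
        sup_le hNIle (le_trans le_sup_right le_sup_left)
      exact hle hFj0
    · exact Submodule.mem_sup_left
        (Submodule.mem_sup_right (Ideal.subset_span ⟨j', hjj, rfl⟩))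
  have hnak : IZ' ≤ J := Stmt9Aux.nakayama hJhom hIZ'le
  have hJle : J ≤ IZ' :=
    sup_le hIZle (Ideal.span_le.mpr (by rintro z ⟨j', -, rfl⟩; exact hFZ' j'))
  -- contradict minimality
  set G : Fin p' → BiRing k n m := fun l => F (j0.succAbove l) with hGdef
  have hrange : Set.range G = Jset := by
    ext z
    constructor
    · rintro ⟨l, rfl⟩
      exact ⟨j0.succAbove l, Fin.succAbove_ne j0 l, rfl⟩
    · rintro ⟨j', hne, rfl⟩
      obtain ⟨l, hl⟩ := Fin.exists_succAbove_eq hne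
      exact ⟨l, by rw [hGdef]; simp only; rw [hl]⟩
  refine hminimal p' (Nat.lt_succ_self p') G (fun l => ⟨d _, hdeg _⟩) ?_
  rw [hrange]
  exact le_antisymm hJle hnak
end
end
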